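/- arXiv:2301.07003 — 4 statements merged into one kernel-verified Lean document; each statement's English description precedes it below -/
import Mathlib

section
/- Let M and M' be quantum channels on M_n with M ergodic, i.e. M has a unique invariant state ρ_*. Then for every p ∈ (0,1], the channel M_p := pM + (1−p)M' is ergodic; moreover, denoting its unique invariant state by ρ_{*,p}, there exist π_p ∈ (0,1] and a state σ_p such that ρ_{*,p} = π_p ρ_* + (1−π_p) σ_p. -/
open Matrix
open scoped ComplexOrder

noncomputable section

/-- The algebra of `n × n` complex matrices. -/
abbrev Mn (n : ℕ) : Type := Matrix (Fin n) (Fin n) ℂ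

/-- The map `X ↦ Q X Q`. -/
def sandwich {n : ℕ} (Q : Mn n) : Module.End ℂ (Mn n) :=
  (LinearMap.mulLeft ℂ Q).comp (LinearMap.mulRight ℂ Q)

/-- The sum of the two components of a pair. -/
def sumPair (n : ℕ) : (Mn n × Mn n) →ₗ[ℂ] Mn n :=
  LinearMap.fst ℂ (Mn n) (Mn n) + LinearMap.snd ℂ (Mn n) (Mn n)

/-- The QMC `Λ_{T,V}` induced by the channel `T` and the subspace `V` (with orthogonal
projection `P` onto `V` and `Q = I − P`):
`Λ(X₁,X₂) = ((I−ℚ)(T(X₁+X₂)), ℚ(T(X₁+X₂)))` where `ℚ(Y) = QYQ`. -/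
def Lam {n : ℕ} (T : Module.End ℂ (Mn n)) (Q : Mn n) : Module.End ℂ (Mn n × Mn n) :=
  LinearMap.prod
    (((1 : Module.End ℂ (Mn n)) - sandwich Q) ∘ₗ (T ∘ₗ sumPair n))
    ((sandwich Q) ∘ₗ (T ∘ₗ sumPair n))

/-- `ℙ₁(X₁,X₂) = (X₁,0)`. -/
def proj1 (n : ℕ) : Module.End ℂ (Mn n × Mn n) :=
  (LinearMap.inl ℂ (Mn n) (Mn n)).comp (LinearMap.fst ℂ (Mn n) (Mn n))

/-- `ℙ₂(X₁,X₂) = (0,X₂)`. -/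
def proj2 (n : ℕ) : Module.End ℂ (Mn n × Mn n) :=
  (LinearMap.inr ℂ (Mn n) (Mn n)).comp (LinearMap.snd ℂ (Mn n) (Mn n))

/-- The block-diagonal part `S_d = diag(S₁₁,S₂₂)` of a map on `M_n ⊕ M_n`. -/
def diagPart {n : ℕ} (S : Module.End ℂ (Mn n × Mn n)) : Module.End ℂ (Mn n × Mn n) :=
  proj1 n * S * proj1 n + proj2 n * S * proj2 n

/-- The map `E(X₁,X₂) = (X₁+X₂, X₁+X₂)`. -/
def Emap (n : ℕ) : Module.End ℂ (Mn n × Mn n) :=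
  LinearMap.prod (sumPair n) (sumPair n)

/-- The map `Θ_W(X₁,X₂) = Tr(X₁+X₂)·W`. -/
def Theta {n : ℕ} (W : Mn n × Mn n) : Module.End ℂ (Mn n × Mn n) :=
  ((Matrix.traceLinearMap (Fin n) ℂ ℂ) ∘ₗ sumPair n).smulRight W

/-- The mean hitting time `τ(ρ → V) = Σ_{r ≥ 1} r·Tr(ℙT(ℚT)^{r−1} ρ)`. -/
def tau {n : ℕ} (T : Module.End ℂ (Mn n)) (P Q : Mn n) (ρ : Mn n) : ℂ :=
  ∑' r : ℕ, ((r : ℂ) + 1) * ((sandwich P * T * (sandwich Q * T) ^ r) ρ).trace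

/-- The pure state `ρ_φ = |φ⟩⟨φ|`. -/
def rhoOf {n : ℕ} (φ : Fin n → ℂ) : Mn n := Matrix.vecMulVec φ (star φ)

/-- A positive map on `M_n`. -/
def IsPosMap {n : ℕ} (T : Module.End ℂ (Mn n)) : Prop :=
  ∀ X : Mn n, X.PosSemidef → (T X).PosSemidef

/-- A trace-preserving map on `M_n`. -/
def IsTracePreserving {n : ℕ} (T : Module.End ℂ (Mn n)) : Prop :=
  ∀ X : Mn n, (T X).trace = X.trace

/-- A quantum channel: a completely positive trace-preserving map, given by a Kraus
decomposition `T(X) = Σᵢ Vᵢ X Vᵢ*` with `Σᵢ Vᵢ* Vᵢ = I`. -/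
def IsChannel {n : ℕ} (T : Module.End ℂ (Mn n)) : Prop :=
  ∃ (k : ℕ) (V : Fin k → Mn n),
    (∀ X : Mn n, T X = ∑ i, V i * X * (V i)ᴴ) ∧ (∑ i, (V i)ᴴ * V i = 1)

/-- Irreducibility of a positive map on `M_n`: the only orthogonal projections `P` with
`T(P M_n P) ⊆ P M_n P` are `P = 0` and `P = I`. -/
def IsIrreducibleMap {n : ℕ} (T : Module.End ℂ (Mn n)) : Prop :=
  ∀ P : Mn n, P.IsHermitian → P * P = P →
    (∀ X : Mn n, ∃ Y : Mn n, T (P * X * P) = P * Y * P) → P = 0 ∨ P = 1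


namespace StmtAux
variable {n : ℕ}
section
variable {A : Mn n} (hA : A.IsHermitian) (f g : ℝ → ℝ)
def Phi {A : Mn n} (hA : A.IsHermitian) (f : ℝ → ℝ) : Mn n :=
  (hA.eigenvectorUnitary : Mn n) * diagonal (fun i => (f (hA.eigenvalues i) : ℂ))
    * (star hA.eigenvectorUnitary : Mn n)

variable {A : Mn n} (hA : A.IsHermitian) (f g : ℝ → ℝ)

lemma star_mul_U : (star hA.eigenvectorUnitary : Mn n) * (hA.eigenvectorUnitary : Mn n) = 1 := by
  simp

lemma Phi_mul : Phi hA f * Phi hA g = Phi hA (fun x => f x * g x) := by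
  unfold Phi
  set U := (hA.eigenvectorUnitary : Mn n)
  set sU := (star hA.eigenvectorUnitary : Mn n)
  set D1 := (diagonal (fun i => (f (hA.eigenvalues i) : ℂ)) : Mn n)
  set D2 := (diagonal (fun i => (g (hA.eigenvalues i) : ℂ)) : Mn n)
  have h : sU * U = 1 := star_mul_U hA
  have h1 : (U * D1 * sU) * (U * D2 * sU) = U * (D1 * ((sU * U) * D2)) * sU := by
    noncomm_ring
  rw [h1, h, one_mul]
  congr 2
  rw [diagonal_mul_diagonal]
  congr 1
  funext i
  push_cast
  ring

lemma Phi_herm : (Phi hA f).IsHermitian := by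
  show _ᴴ = _
  unfold Phi
  simp only [conjTranspose_mul, diagonal_conjTranspose, Matrix.star_eq_conjTranspose,
    conjTranspose_conjTranspose, mul_assoc]
  have : (star fun i => ((f (hA.eigenvalues i) : ℂ))) = fun i => ((f (hA.eigenvalues i) : ℂ)) := by
    funext i
    simp [Complex.star_def, Complex.conj_ofReal]
  rw [this]

lemma Phi_congr (h : ∀ i, f (hA.eigenvalues i) = g (hA.eigenvalues i)) :
    Phi hA f = Phi hA g := by
  unfold Phi
  have : (fun i => (f (hA.eigenvalues i) : ℂ)) = fun i => (g (hA.eigenvalues i) : ℂ) :=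
    funext fun i => by rw [h i]
  rw [this]

lemma Phi_id : Phi hA id = A := (hA.spectral_theorem).symm

lemma Phi_sub : Phi hA f - Phi hA g = Phi hA (fun x => f x - g x) := by
  unfold Phi
  rw [← sub_mul, ← mul_sub]
  congr 2
  ext i j
  by_cases hij : i = j <;> simp [diagonal_apply, hij]

lemma Phi_psd (h : ∀ i, 0 ≤ f (hA.eigenvalues i)) : (Phi hA f).PosSemidef := by
  unfold Phi
  have hd : (diagonal (fun i => (f (hA.eigenvalues i) : ℂ)) : Mn n).PosSemidef := by
    rw [posSemidef_diagonal_iff]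
    intro i
    exact_mod_cast h i
  simpa [Matrix.star_eq_conjTranspose] using
    hd.mul_mul_conjTranspose_same (hA.eigenvectorUnitary : Mn n)

lemma Phi_trace : (Phi hA f).trace = ((∑ i, f (hA.eigenvalues i) : ℝ) : ℂ) := by
  unfold Phi
  rw [Matrix.trace_mul_cycle, star_mul_U, one_mul, trace_diagonal]
  push_cast
  rfl

lemma mul_Phi_eq_zero {B : Mn n} (hBA : B * A = 0) (hf0 : f 0 = 0) : B * Phi hA f = 0 := by
  unfold Phi
  have hspec := hA.spectral_theorem
  set U := (hA.eigenvectorUnitary : Mn n) with hU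
  set sU := (star hA.eigenvectorUnitary : Mn n) with hsU
  have hAU : A * U = U * diagonal (fun i => (hA.eigenvalues i : ℂ)) := by
    conv_lhs => rw [hspec, Unitary.conjStarAlgAut_apply]
    rw [mul_assoc, star_mul_U hA, mul_one]
    rfl
  have h1 : B * U * diagonal (fun i => (hA.eigenvalues i : ℂ)) = 0 := by
    rw [mul_assoc, ← hAU, ← mul_assoc, hBA, zero_mul]
  have h2 : B * U * diagonal (fun i => (f (hA.eigenvalues i) : ℂ)) = 0 := by
    ext i j
    have h1e := congrFun (congrFun h1 i) j
    rw [mul_diagonal] at h1e ⊢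
    simp only [Matrix.zero_apply] at h1e ⊢
    rcases eq_or_ne (hA.eigenvalues j) 0 with h | h
    · rw [h, hf0]; simp
    · have : ((hA.eigenvalues j : ℂ)) ≠ 0 := by exact_mod_cast h
      have := mul_eq_zero.mp h1e
      rcases this with h' | h'
      · rw [h']; ring
      · exact absurd h' this
  rw [← mul_assoc, ← mul_assoc, h2, zero_mul]

lemma Phi_mul_eq_zero {B : Mn n} (hAB : A * B = 0) (hf0 : f 0 = 0) : Phi hA f * B = 0 := by
  have h1 : Bᴴ * A = 0 := by
    have := congrArg conjTranspose hAB
    simpa [conjTranspose_mul, hA.eq] using this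
  have h2 := mul_Phi_eq_zero hA f h1 hf0
  have := congrArg conjTranspose h2
  simpa [conjTranspose_mul, (Phi_herm hA f).eq] using this

end

lemma Phi_zero {A : Mn n} (hA : A.IsHermitian) : Phi hA (fun _ => 0) = 0 := by
  unfold Phi
  have h : (diagonal (fun _ : Fin n => (((0:ℝ)):ℂ)) : Mn n) = 0 := by
    ext i j
    by_cases hij : i = j <;> simp [diagonal_apply, hij]
  rw [h, mul_zero, zero_mul]

lemma Phi_const {A : Mn n} (hA : A.IsHermitian) (c : ℝ) :
    Phi hA (fun _ => c) = (c : ℂ) • 1 := by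
  unfold Phi
  have h : (diagonal (fun _ : Fin n => ((c:ℝ):ℂ)) : Mn n) = (c : ℂ) • 1 := by
    ext i j
    by_cases hij : i = j <;> simp [diagonal_apply, Matrix.one_apply, hij]
  rw [h, mul_smul_comm, smul_mul_assoc, mul_one]
  congr 1
  simpa using unitary.coe_mul_star_self hA.eigenvectorUnitary

lemma Phi_smul {A : Mn n} (hA : A.IsHermitian) (f : ℝ → ℝ) (c : ℝ) :
    (c : ℂ) • Phi hA f = Phi hA (fun x => c * f x) := by
  unfold Phi
  have h : (diagonal (fun i => ((c * f (hA.eigenvalues i) : ℝ) : ℂ)) : Mn n)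
      = (c : ℂ) • diagonal (fun i => ((f (hA.eigenvalues i) : ℝ) : ℂ)) := by
    ext i j
    by_cases hij : i = j <;> simp [diagonal_apply, hij]
  rw [h, mul_smul_comm, smul_mul_assoc]
lemma psd_smul_real {X : Mn n} (hX : X.PosSemidef) {c : ℝ} (hc : 0 ≤ c) :
    ((c : ℂ) • X).PosSemidef := by
  constructor
  · have := hX.1
    show _ᴴ = _
    rw [conjTranspose_smul, hX.1.eq]
    congr 1
    simp [Complex.star_def, Complex.conj_ofReal]
  · intro x
    have h1 := hX.2 x
    have : (x.sum fun i xi => x.sum fun j xj => star xi * ((c:ℂ) • X) i j * xj)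
        = (c:ℂ) * (x.sum fun i xi => x.sum fun j xj => star xi * X i j * xj) := by
      simp only [Finsupp.sum, Finset.mul_sum]
      refine Finset.sum_congr rfl fun i _ => Finset.sum_congr rfl fun j _ => ?_
      rw [Matrix.smul_apply, smul_eq_mul]
      ring
    rw [this]
    have hc' : (0:ℂ) ≤ (c:ℂ) := by exact_mod_cast hc
    exact mul_nonneg hc' h1

lemma psd_trace_real {X : Mn n} (hX : X.PosSemidef) :
    ∃ r : ℝ, 0 ≤ r ∧ X.trace = (r : ℂ) ∧ (X ≠ 0 → 0 < r) := by
  refine ⟨∑ i, hX.1.eigenvalues i, Finset.sum_nonneg fun i _ => hX.eigenvalues_nonneg i, ?_, ?_⟩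
  · conv_lhs => rw [← Phi_id hX.1]
    exact Phi_trace hX.1 id
  · intro hne
    rcases (Finset.sum_nonneg fun i _ => hX.eigenvalues_nonneg i).lt_or_eq with h | h
    · exact h
    · exfalso
      apply hne
      have hall : ∀ i ∈ Finset.univ, hX.1.eigenvalues i = 0 := by
        intro i _
        have := (Finset.sum_eq_zero_iff_of_nonneg (fun i _ => hX.eigenvalues_nonneg i)).mp h.symm
        exact this i (Finset.mem_univ i)
      calc X = Phi hX.1 id := (Phi_id hX.1).symm
        _ = Phi hX.1 (fun _ => 0) := Phi_congr hX.1 _ _ fun i => by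
              simp [hall i (Finset.mem_univ i)]
        _ = 0 := Phi_zero hX.1

lemma psd_trace_zero {X : Mn n} (hX : X.PosSemidef) (h : X.trace = 0) : X = 0 := by
  obtain ⟨r, hr0, hrt, hrp⟩ := psd_trace_real hX
  by_contra hne
  have h1 : (r:ℂ) = 0 := by rw [← hrt, h]
  have h2 : r = 0 := by exact_mod_cast h1
  exact (hrp hne).ne' h2

lemma psd_mul_trace_real {A B : Mn n} (hA : A.PosSemidef) (hB : B.PosSemidef) :
    ∃ u : ℝ, 0 ≤ u ∧ (A * B).trace = (u : ℂ) := by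
  set s := Phi hA.1 Real.sqrt
  have hs : s * s = A := by
    rw [Phi_mul]
    conv_rhs => rw [← Phi_id hA.1]
    exact Phi_congr hA.1 _ _ fun i => Real.mul_self_sqrt (hA.eigenvalues_nonneg i)
  have hsh : sᴴ = s := (Phi_herm hA.1 _).eq
  have hpsd : (s * B * s).PosSemidef := by
    have := hB.mul_mul_conjTranspose_same s
    rwa [hsh] at this
  obtain ⟨u, hu0, hut, _⟩ := psd_trace_real hpsd
  refine ⟨u, hu0, ?_⟩
  calc (A * B).trace = (s * (s * B)).trace := by rw [← hs, mul_assoc]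
    _ = ((s * B) * s).trace := trace_mul_comm _ _
    _ = (u : ℂ) := hut

lemma conj_cancel {B Q : Mn n} (hB : B.PosSemidef) (hQ : Q.IsHermitian)
    (h : Q * B * Q = 0) : B * Q = 0 ∧ Q * B = 0 := by
  set s := Phi hB.1 Real.sqrt
  have hs : s * s = B := by
    rw [Phi_mul]
    conv_rhs => rw [← Phi_id hB.1]
    exact Phi_congr hB.1 _ _ fun i => Real.mul_self_sqrt (hB.eigenvalues_nonneg i)
  have hsh : sᴴ = s := (Phi_herm hB.1 _).eq
  have h1 : (s * Q)ᴴ * (s * Q) = 0 := by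
    rw [conjTranspose_mul, hsh, hQ.eq]
    calc Q * s * (s * Q) = Q * (s * s) * Q := by noncomm_ring
      _ = 0 := by rw [hs, h]
  have h2 : s * Q = 0 := conjTranspose_mul_self_eq_zero.mp h1
  have hBQ : B * Q = 0 := by rw [← hs, mul_assoc, h2, mul_zero]
  refine ⟨hBQ, ?_⟩
  have := congrArg conjTranspose hBQ
  simpa [conjTranspose_mul, hB.1.eq, hQ.eq] using this
def fplus : ℝ → ℝ := fun x => max x 0
def fminus : ℝ → ℝ := fun x => max (-x) 0
def find : ℝ → ℝ := fun x => if 0 < x then 1 else 0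

lemma fplus_nonneg (x : ℝ) : 0 ≤ fplus x := le_max_right _ _
lemma fminus_nonneg (x : ℝ) : 0 ≤ fminus x := le_max_right _ _
lemma fplus_sub_fminus (x : ℝ) : fplus x - fminus x = x := by
  unfold fplus fminus; rcases le_total x 0 with h | h
  · rw [max_eq_right h, max_eq_left (by linarith)]; ring
  · rw [max_eq_left h, max_eq_right (by linarith)]; ring
lemma find_mul_find (x : ℝ) : find x * find x = find x := by
  unfold find; split_ifs <;> ring
lemma find_mul_fplus (x : ℝ) : find x * fplus x = fplus x := by
  unfold find fplus; split_ifs with h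
  · ring
  · push_neg at h; rw [max_eq_right h]; ring
lemma fplus_mul_find (x : ℝ) : fplus x * find x = fplus x := by
  rw [mul_comm]; exact find_mul_fplus x
lemma find_mul_fminus (x : ℝ) : find x * fminus x = 0 := by
  unfold find fminus; split_ifs with h
  · rw [max_eq_right (by linarith)]; ring
  · ring
lemma find_mul_id (x : ℝ) : find x * id x = fplus x := by
  unfold find fplus id; split_ifs with h
  · rw [one_mul, max_eq_left h.le]
  · push_neg at h; rw [max_eq_right h]; ring
lemma fplus_mul_fminus (x : ℝ) : fplus x * fminus x = 0 := by
  unfold fplus fminus; rcases le_total x 0 with h | h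
  · rw [max_eq_right h]; ring
  · rw [max_eq_right (by linarith : -x ≤ 0)]; ring

lemma proj_psd {P : Mn n} (hP : P.IsHermitian) (hP2 : P * P = P) : P.PosSemidef := by
  have h : P = Pᴴ * P := by rw [hP.eq, hP2]
  rw [h]
  exact posSemidef_conjTranspose_mul_self P

lemma one_sub_proj {P : Mn n} (hP : P.IsHermitian) (hP2 : P * P = P) :
    ((1 : Mn n) - P).IsHermitian ∧ ((1:Mn n) - P) * ((1:Mn n) - P) = (1:Mn n) - P := by
  constructor
  · exact Matrix.isHermitian_one.sub hP
  · rw [mul_sub, sub_mul, sub_mul, hP2, mul_one, one_mul, mul_one]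
    abel

lemma fixed_parts {T : Module.End ℂ (Mn n)} (hTpos : IsPosMap T) (hTtp : IsTracePreserving T)
    {δ : Mn n} (hδ : δ.IsHermitian) (hfix : T δ = δ) :
    T (Phi hδ fplus) = Phi hδ fplus ∧ T (Phi hδ fminus) = Phi hδ fminus := by
  set pos := Phi hδ fplus with hposdef
  set neg := Phi hδ fminus with hnegdef
  set P := Phi hδ find with hPdef
  have hsub : pos - neg = δ := by
    rw [hposdef, hnegdef, Phi_sub]
    calc Phi hδ (fun x => fplus x - fminus x) = Phi hδ id :=
          Phi_congr hδ _ _ fun i => fplus_sub_fminus _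
      _ = δ := Phi_id hδ
  have hpos : pos.PosSemidef := Phi_psd hδ _ fun i => fplus_nonneg _
  have hneg : neg.PosSemidef := Phi_psd hδ _ fun i => fminus_nonneg _
  have hPh : P.IsHermitian := Phi_herm hδ _
  have hP2 : P * P = P := by
    rw [hPdef, Phi_mul]; exact Phi_congr hδ _ _ fun i => find_mul_find _
  have hPpos : P * pos = pos := by
    rw [hPdef, hposdef, Phi_mul]; exact Phi_congr hδ _ _ fun i => find_mul_fplus _
  have hPneg : P * neg = 0 := by
    rw [hPdef, hnegdef, Phi_mul]
    rw [Phi_congr hδ _ (fun _ => 0) fun i => find_mul_fminus _, Phi_zero]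
  have hPδ : P * δ = pos := by
    conv_lhs => rw [← Phi_id hδ]
    rw [hPdef, Phi_mul, hposdef]
    exact Phi_congr hδ _ _ fun i => find_mul_id _
  set Q := (1 : Mn n) - P with hQdef
  obtain ⟨hQh, hQ2⟩ := one_sub_proj hPh hP2
  have hQpsd : Q.PosSemidef := proj_psd hQh hQ2
  have hPpsd : P.PosSemidef := proj_psd hPh hP2
  set B := T pos with hBdef
  set C := T neg with hCdef
  have hB : B.PosSemidef := hTpos _ hpos
  have hC : C.PosSemidef := hTpos _ hneg
  have hBC : B - C = δ := by rw [hBdef, hCdef, ← map_sub, hsub, hfix]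
  obtain ⟨a, ha0, haB⟩ := psd_mul_trace_real hQpsd hB
  obtain ⟨b, hb0, hbC⟩ := psd_mul_trace_real hPpsd hC
  -- trace bookkeeping
  have hsplit : (Q * B).trace + (P * B).trace = B.trace := by
    rw [← trace_add]
    congr 1
    rw [hQdef, sub_mul, one_mul]
    abel
  have hPBC : (P * B).trace = (P * C).trace + pos.trace := by
    have : P * B - P * C = pos := by rw [← mul_sub, hBC, hPδ]
    have h2 := congrArg Matrix.trace this
    rw [trace_sub] at h2
    linear_combination h2
  have hBtr : B.trace = pos.trace := hTtp pos
  have hab : (a : ℂ) + (b : ℂ) = 0 := by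
    have := hsplit
    rw [haB, hPBC, hbC, hBtr] at this
    linear_combination this
  have hab' : a + b = 0 := by exact_mod_cast hab
  have haz : a = 0 := by linarith
  have hbz : b = 0 := by linarith
  -- QBQ = 0
  have hQBQ : Q * B * Q = 0 := by
    apply psd_trace_zero
    · have := hB.mul_mul_conjTranspose_same Q
      rwa [hQh.eq] at this
    · rw [trace_mul_cycle, hQ2, haB, haz, Complex.ofReal_zero]
  obtain ⟨hBQ, hQB⟩ := conj_cancel hB hQh hQBQ
  have hPCP : P * C * P = 0 := by
    apply psd_trace_zero
    · have := hC.mul_mul_conjTranspose_same P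
      rwa [hPh.eq] at this
    · rw [trace_mul_cycle, hP2, hbC, hbz, Complex.ofReal_zero]
  obtain ⟨hCP, hPC⟩ := conj_cancel hC hPh hPCP
  have hPB : P * B = B := by
    have h0 : B - P * B = 0 := by rw [← hQB, sub_mul, one_mul]
    have := sub_eq_zero.mp h0
    exact this.symm
  have hBeq : B = pos := by
    have h1 : B = C + δ := by rw [← hBC]; abel
    calc B = P * B := hPB.symm
      _ = P * C + P * δ := by rw [h1, mul_add]
      _ = pos := by rw [hPC, hPδ, zero_add]
  have hCeq : C = neg := by
    have h1 : C = B - δ := by rw [← hBC]; abel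
    rw [h1, hBeq, ← hsub]
    abel
  exact ⟨hBeq, hCeq⟩

lemma psd_le_proj {X P : Mn n} (hX : X.PosSemidef) (hP : P.IsHermitian) (hP2 : P * P = P)
    (hXP : P * X * P = X) {r : ℝ} (hr : X.trace = (r : ℂ)) :
    ((r : ℂ) • P - X).PosSemidef := by
  have hev : ∀ i, hX.1.eigenvalues i ≤ r := by
    intro i
    have hsum : X.trace = ((∑ j, hX.1.eigenvalues j : ℝ) : ℂ) := by
      conv_lhs => rw [← Phi_id hX.1]
      exact Phi_trace hX.1 id
    have : ((∑ j, hX.1.eigenvalues j : ℝ) : ℂ) = (r : ℂ) := by rw [← hsum, hr]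
    have hsr : (∑ j, hX.1.eigenvalues j) = r := by exact_mod_cast this
    rw [← hsr]
    exact Finset.single_le_sum (fun j _ => hX.eigenvalues_nonneg j) (Finset.mem_univ i)
  have h1 : ((r : ℂ) • (1 : Mn n) - X).PosSemidef := by
    have hs : Phi hX.1 (fun _ => r) - Phi hX.1 id
        = Phi hX.1 (fun x => (fun _ : ℝ => r) x - id x) := Phi_sub hX.1 _ _
    rw [Phi_const hX.1 r, Phi_id hX.1] at hs
    rw [hs]
    exact Phi_psd hX.1 _ fun i => by
      show (0:ℝ) ≤ r - hX.1.eigenvalues i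
      linarith [hev i]
  have h2 := h1.mul_mul_conjTranspose_same P
  rw [hP.eq] at h2
  have h3 : P * ((r : ℂ) • (1 : Mn n) - X) * P = (r : ℂ) • P - X := by
    rw [mul_sub, sub_mul, mul_smul_comm, mul_one, smul_mul_assoc, hP2, hXP]
  rwa [h3] at h2

lemma parts_sub {d : Mn n} (hd : d.IsHermitian) : Phi hd fplus - Phi hd fminus = d := by
  rw [Phi_sub]
  calc Phi hd (fun x => fplus x - fminus x) = Phi hd id :=
        Phi_congr hd _ _ fun i => fplus_sub_fminus _
    _ = d := Phi_id hd

lemma fplus_zero : fplus 0 = 0 := by unfold fplus; simp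
lemma fminus_zero : fminus 0 = 0 := by unfold fminus; simp

lemma compress_parts {d P : Mn n} (hd : d.IsHermitian) (hP2 : P * P = P)
    (hdV : P * d * P = d) (f : ℝ → ℝ) (hf0 : f 0 = 0) : P * Phi hd f * P = Phi hd f := by
  have hQd : ((1 : Mn n) - P) * d = 0 := by
    have hPd : P * d = d := by
      conv_lhs => rw [← hdV]
      calc P * (P * d * P) = (P * P) * d * P := by noncomm_ring
        _ = P * d * P := by rw [hP2]
        _ = d := hdV
    rw [sub_mul, one_mul, hPd, sub_self]
  have hdQ : d * ((1 : Mn n) - P) = 0 := by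
    have hdP : d * P = d := by
      conv_lhs => rw [← hdV]
      calc (P * d * P) * P = P * d * (P * P) := by noncomm_ring
        _ = P * d * P := by rw [hP2]
        _ = d := hdV
    rw [mul_sub, mul_one, hdP, sub_self]
  have h1 : ((1:Mn n) - P) * Phi hd f = 0 := mul_Phi_eq_zero hd f hQd hf0
  have h2 : Phi hd f * ((1:Mn n) - P) = 0 := Phi_mul_eq_zero hd f hdQ hf0
  have h3 : P * Phi hd f = Phi hd f := by
    have := sub_eq_zero.mp (by rw [← h1, sub_mul, one_mul] : Phi hd f - P * Phi hd f = 0)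
    exact this.symm
  have h4 : Phi hd f * P = Phi hd f := by
    have := sub_eq_zero.mp (by rw [← h2, mul_sub, mul_one] : Phi hd f - Phi hd f * P = 0)
    exact this.symm
  rw [h3, h4]
lemma conj_sub_smul (q a b : Mn n) (t : ℂ) :
    q * (a - t • b) * q = q * a * q - t • (q * b * q) := by
  rw [mul_sub, sub_mul, mul_smul_comm, smul_mul_assoc]

lemma conj_smul_sub (q a b : Mn n) (t : ℂ) :
    q * (t • a - b) * q = t • (q * a * q) - q * b * q := by
  rw [mul_sub, sub_mul, mul_smul_comm, smul_mul_assoc]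

/-- abstract core of the support argument -/
lemma supp_core (M : Module.End ℂ (Mn n)) (hMpos : IsPosMap M)
    {σ : Mn n} (hσ : σ.PosSemidef) {p : ℝ} (hp : 0 < p)
    (hdom : (σ - (p : ℂ) • M σ).PosSemidef)
    {P : Mn n} (hPh : P.IsHermitian) (hP2 : P * P = P)
    (hPσ : P * σ = σ) (hσP : σ * P = σ)
    {c : ℝ} (hcpos : 0 < c) (hcP : (σ - (c : ℂ) • P).PosSemidef) :
    ∀ X : Mn n, P * X * P = X → P * M X * P = M X := by
  obtain ⟨hQh, hQ2⟩ := one_sub_proj hPh hP2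
  have hQσ : (1 - P) * σ = 0 := by rw [sub_mul, one_mul, hPσ, sub_self]
  have hσQ : σ * (1 - P) = 0 := by rw [mul_sub, mul_one, hσP, sub_self]
  have conjQ : ∀ a : Mn n, (1 - P) * a * (1 - P) = 0 → a.PosSemidef →
      a * (1 - P) = 0 ∧ (1 - P) * a = 0 := fun a h ha => conj_cancel ha hQh h
  -- step 1 : (1-P) (M Y) (1-P) = 0 for any PSD Y ≤ t σ
  have step1 : ∀ (Y : Mn n), Y.PosSemidef → (∃ t : ℝ, ((t:ℂ) • σ - Y).PosSemidef) →
      (1 - P) * M Y * (1 - P) = 0 := by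
    intro Y hY ⟨t, ht⟩
    have hMY : (M Y).PosSemidef := hMpos Y hY
    have hMYQ : ((1-P) * M Y * (1-P)).PosSemidef := by
      have := hMY.mul_mul_conjTranspose_same (1-P)
      rwa [hQh.eq] at this
    -- (1-P) M σ (1-P) = 0 first
    have hMσpsd := hMpos σ hσ
    have hMσQpsd : ((1-P) * M σ * (1-P)).PosSemidef := by
      have := hMσpsd.mul_mul_conjTranspose_same (1-P)
      rwa [hQh.eq] at this
    have hQMσQ : (1 - P) * M σ * (1 - P) = 0 := by
      have hRpsd : ((1-P) * (σ - (p:ℂ) • M σ) * (1-P)).PosSemidef := by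
        have := hdom.mul_mul_conjTranspose_same (1-P)
        rwa [hQh.eq] at this
      have hsplit : (1-P) * (σ - (p:ℂ) • M σ) * (1-P)
          = (1-P) * σ * (1-P) - (p:ℂ) • ((1-P) * M σ * (1-P)) :=
        conj_sub_smul _ _ _ _
      rw [hQσ, zero_mul, zero_sub] at hsplit
      obtain ⟨u, hu0, hut, _⟩ := psd_trace_real hRpsd
      obtain ⟨v, hv0, hvt, _⟩ := psd_trace_real hMσQpsd
      have heq : (u : ℂ) = -((p:ℂ) * (v:ℂ)) := by
        rw [← hut, hsplit, trace_neg, trace_smul, hvt, smul_eq_mul]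
      have heq' : u = -(p * v) := by exact_mod_cast heq
      have hv : v = 0 := by nlinarith
      apply psd_trace_zero hMσQpsd
      rw [hvt, hv, Complex.ofReal_zero]
    -- now Y ≤ t σ
    have hts : ((t:ℂ) • M σ - M Y).PosSemidef := by
      have := hMpos _ ht
      rwa [map_sub, _root_.map_smul] at this
    have htsQ : ((1-P) * ((t:ℂ) • M σ - M Y) * (1-P)).PosSemidef := by
      have := hts.mul_mul_conjTranspose_same (1-P)
      rwa [hQh.eq] at this
    have hexp : (1-P) * ((t:ℂ) • M σ - M Y) * (1-P)
        = (t:ℂ) • ((1-P) * M σ * (1-P)) - (1-P) * M Y * (1-P) :=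
      conj_smul_sub _ _ _ _
    rw [hQMσQ, smul_zero, zero_sub] at hexp
    rw [hexp] at htsQ
    obtain ⟨u, hu0, hut, _⟩ := psd_trace_real htsQ
    obtain ⟨v, hv0, hvt, _⟩ := psd_trace_real hMYQ
    have heq : (u:ℂ) = -(v:ℂ) := by rw [← hut, trace_neg, hvt]
    have heq' : u = -v := by exact_mod_cast heq
    have hv : v = 0 := by linarith
    apply psd_trace_zero hMYQ
    rw [hvt, hv, Complex.ofReal_zero]
  -- step 2 : PSD Y in compression range are dominated
  have step2 : ∀ (Y : Mn n), Y.PosSemidef → P * Y * P = Y → P * M Y * P = M Y := by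
    intro Y hY hYV
    obtain ⟨r, hr0, hrt, _⟩ := psd_trace_real hY
    have h1 : ((r:ℂ) • P - Y).PosSemidef := psd_le_proj hY hPh hP2 hYV hrt
    have hdomY : ∃ t : ℝ, ((t:ℂ) • σ - Y).PosSemidef := by
      refine ⟨r / c, ?_⟩
      have h2 : (((r/c : ℝ)):ℂ) • (σ - (c:ℂ) • P) = ((r/c :ℝ):ℂ) • σ - (r:ℂ) • P := by
        rw [smul_sub, smul_smul, ← Complex.ofReal_mul, div_mul_cancel₀ r hcpos.ne']
      have h3 := psd_smul_real hcP (by positivity : (0:ℝ) ≤ r / c)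
      rw [h2] at h3
      have := h3.add h1
      have h4 : ((r/c :ℝ):ℂ) • σ - (r:ℂ) • P + ((r:ℂ) • P - Y) = ((r/c :ℝ):ℂ) • σ - Y := by
        abel
      rwa [h4] at this
    have hz := step1 Y hY hdomY
    obtain ⟨hMYQ', hQMY'⟩ := conjQ (M Y) hz (hMpos Y hY)
    have e1 : P * M Y = M Y := by
      have := sub_eq_zero.mp (by rw [← hQMY', sub_mul, one_mul] : M Y - P * M Y = 0)
      exact this.symm
    have e2 : M Y * P = M Y := by
      have := sub_eq_zero.mp (by rw [← hMYQ', mul_sub, mul_one] : M Y - M Y * P = 0)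
      exact this.symm
    rw [e1, e2]
  -- step 3 : Hermitian case
  have step3 : ∀ (d : Mn n), d.IsHermitian → P * d * P = d → P * M d * P = M d := by
    intro d hd hdV
    have hpos := step2 (Phi hd fplus) (Phi_psd hd _ fun i => fplus_nonneg _)
      (compress_parts hd hP2 hdV fplus fplus_zero)
    have hneg := step2 (Phi hd fminus) (Phi_psd hd _ fun i => fminus_nonneg _)
      (compress_parts hd hP2 hdV fminus fminus_zero)
    have hMd : M d = M (Phi hd fplus) - M (Phi hd fminus) := by
      rw [← map_sub, parts_sub hd]
    rw [hMd, mul_sub, sub_mul, hpos, hneg]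
  -- step 4 : general case
  intro X hXV
  have hconj : P * Xᴴ * P = Xᴴ := by
    conv_rhs => rw [← hXV]
    rw [conjTranspose_mul, conjTranspose_mul, hPh.eq, ← mul_assoc]
  have hA1 : (X + Xᴴ).IsHermitian := by
    show _ᴴ = _
    rw [conjTranspose_add, conjTranspose_conjTranspose, add_comm]
  have hA2 : (Complex.I • (X - Xᴴ)).IsHermitian := by
    show _ᴴ = _
    rw [conjTranspose_smul, conjTranspose_sub, conjTranspose_conjTranspose]
    have hsI : (star Complex.I) = -Complex.I := by
      simp [Complex.star_def, Complex.conj_I]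
    rw [hsI, neg_smul, smul_sub, smul_sub, neg_sub]
  have hA1V : P * (X + Xᴴ) * P = X + Xᴴ := by rw [mul_add, add_mul, hXV, hconj]
  have hA2V : P * (Complex.I • (X - Xᴴ)) * P = Complex.I • (X - Xᴴ) := by
    rw [mul_smul_comm, smul_mul_assoc, mul_sub, sub_mul, hXV, hconj]
  have k1 := step3 _ hA1 hA1V
  have k2 := step3 _ hA2 hA2V
  have hco : (-(2⁻¹:ℂ) * Complex.I) * Complex.I = 2⁻¹ := by
    rw [mul_assoc, Complex.I_mul_I]; ring
  have hXdec : X = (2⁻¹ : ℂ) • (X + Xᴴ) + (-(2⁻¹:ℂ) * Complex.I) • (Complex.I • (X - Xᴴ)) := by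
    rw [smul_smul, hco]
    module
  conv_lhs => rw [hXdec]
  conv_rhs => rw [hXdec]
  rw [map_add, _root_.map_smul, _root_.map_smul]
  rw [mul_add, add_mul, mul_smul_comm, mul_smul_comm, smul_mul_assoc, smul_mul_assoc, k1, k2]
lemma supp_full (M : Module.End ℂ (Mn n)) (hMpos : IsPosMap M)
    {σ : Mn n} (hσ : σ.PosSemidef) (hσne : σ ≠ 0) {p : ℝ} (hp : 0 < p)
    (hdom : (σ - (p : ℂ) • M σ).PosSemidef) :
    ∃ P : Mn n, P.IsHermitian ∧ P * P = P ∧ P ≠ 0 ∧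
      (∃ c : ℝ, 0 < c ∧ (σ - (c : ℂ) • P).PosSemidef) ∧
      (∀ X : Mn n, P * X * P = X → P * M X * P = M X) := by
  classical
  have hPh : (Phi hσ.1 find).IsHermitian := Phi_herm hσ.1 _
  have hP2 : Phi hσ.1 find * Phi hσ.1 find = Phi hσ.1 find := by
    rw [Phi_mul]
    refine Phi_congr hσ.1 _ _ fun i => ?_
    show find (hσ.1.eigenvalues i) * find (hσ.1.eigenvalues i) = find (hσ.1.eigenvalues i)
    unfold find; split_ifs <;> ring
  have hPσ : Phi hσ.1 find * σ = σ := by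
    have h0 : Phi hσ.1 find * Phi hσ.1 id = Phi hσ.1 id := by
      rw [Phi_mul]
      refine Phi_congr hσ.1 _ id fun i => ?_
      show find (hσ.1.eigenvalues i) * id (hσ.1.eigenvalues i) = id (hσ.1.eigenvalues i)
      have hnn := hσ.eigenvalues_nonneg i
      unfold find id
      rcases hnn.lt_or_eq with h | h
      · rw [if_pos h, one_mul]
      · rw [← h]; simp
    rwa [Phi_id] at h0
  have hσP : σ * Phi hσ.1 find = σ := by
    have := congrArg conjTranspose hPσ
    rwa [conjTranspose_mul, hPh.eq, hσ.1.eq] at this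
  have hPne : Phi hσ.1 find ≠ 0 := by
    intro h
    apply hσne
    rw [← hPσ, h, zero_mul]
  have hSne : (Finset.univ.filter (fun i => 0 < hσ.1.eigenvalues i)).Nonempty := by
    by_contra h
    rw [Finset.not_nonempty_iff_eq_empty] at h
    apply hσne
    have hall : ∀ i, hσ.1.eigenvalues i = 0 := by
      intro i
      by_contra hne
      have hi : i ∈ Finset.univ.filter (fun i => 0 < hσ.1.eigenvalues i) :=
        Finset.mem_filter.mpr ⟨Finset.mem_univ i,
          (hσ.eigenvalues_nonneg i).lt_of_ne (Ne.symm hne)⟩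
      rw [h] at hi
      exact absurd hi (Finset.notMem_empty i)
    calc σ = Phi hσ.1 id := (Phi_id hσ.1).symm
      _ = Phi hσ.1 (fun _ => 0) := Phi_congr hσ.1 _ _ fun i => by simp [hall i]
      _ = 0 := Phi_zero hσ.1
  set c := (Finset.univ.filter (fun i => 0 < hσ.1.eigenvalues i)).inf' hSne hσ.1.eigenvalues
    with hcdef
  have hcpos : 0 < c := by
    rw [hcdef, Finset.lt_inf'_iff]
    intro i hi
    exact (Finset.mem_filter.mp hi).2
  have hcP : (σ - (c : ℂ) • Phi hσ.1 find).PosSemidef := by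
    have key : (Phi hσ.1 id - (c:ℂ) • Phi hσ.1 find).PosSemidef := by
      rw [Phi_smul, Phi_sub]
      refine Phi_psd hσ.1 _ fun i => ?_
      show (0:ℝ) ≤ id (hσ.1.eigenvalues i) - c * find (hσ.1.eigenvalues i)
      have hnn := hσ.eigenvalues_nonneg i
      unfold find id
      split_ifs with h
      · have hi : i ∈ Finset.univ.filter (fun i => 0 < hσ.1.eigenvalues i) :=
          Finset.mem_filter.mpr ⟨Finset.mem_univ i, h⟩
        have := Finset.inf'_le hσ.1.eigenvalues hi
        rw [← hcdef] at this
        linarith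
      · linarith
    rwa [Phi_id] at key
  exact ⟨Phi hσ.1 find, hPh, hP2, hPne, ⟨c, hcpos, hcP⟩,
    supp_core M hMpos hσ hp hdom hPh hP2 hPσ hσP hcpos hcP⟩

lemma channel_posMap {T : Module.End ℂ (Mn n)} (hT : IsChannel T) : IsPosMap T := by
  obtain ⟨k, V, hV, -⟩ := hT
  intro X hX
  rw [hV]
  refine Finset.sum_induction _ _ (fun a b ha hb => ha.add hb) Matrix.PosSemidef.zero ?_
  intro i _
  exact hX.mul_mul_conjTranspose_same (V i)

lemma channel_tp {T : Module.End ℂ (Mn n)} (hT : IsChannel T) : IsTracePreserving T := by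
  obtain ⟨k, V, hV, hsum⟩ := hT
  intro X
  rw [hV, trace_sum]
  have h1 : ∀ i : Fin k, (V i * X * (V i)ᴴ).trace = ((V i)ᴴ * V i * X).trace := by
    intro i
    rw [trace_mul_cycle]
  rw [Finset.sum_congr rfl fun i _ => h1 i, ← trace_sum]
  congr 1
  rw [← Finset.sum_mul, hsum, one_mul]

lemma channel_star {T : Module.End ℂ (Mn n)} (hT : IsChannel T) :
    ∀ X : Mn n, T Xᴴ = (T X)ᴴ := by
  obtain ⟨k, V, hV, -⟩ := hT
  intro X
  rw [hV, hV, conjTranspose_sum]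
  refine Finset.sum_congr rfl fun i _ => ?_
  rw [conjTranspose_mul, conjTranspose_mul, conjTranspose_conjTranspose, mul_assoc]

def sandwich' {n : ℕ} (Q : Mn n) : Module.End ℂ (Mn n) :=
  (LinearMap.mulLeft ℂ Q).comp (LinearMap.mulRight ℂ Q)
lemma exists_fixed_state (T : Module.End ℂ (Mn n)) (hTpos : IsPosMap T)
    (hTtp : IsTracePreserving T) (hTstar : ∀ X : Mn n, T Xᴴ = (T X)ᴴ)
    (P : Mn n) (hP : P.IsHermitian) (hP2 : P * P = P) (hPne : P ≠ 0)
    (hinv : ∀ X : Mn n, P * X * P = X → P * T X * P = T X) :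
    ∃ s : Mn n, s.PosSemidef ∧ s.trace = 1 ∧ T s = s ∧ P * s * P = s := by
  classical
  set V : Submodule ℂ (Mn n) := LinearMap.range (sandwich' P) with hV
  have hmem : ∀ X : Mn n, X ∈ V ↔ P * X * P = X := by
    intro X
    constructor
    · rintro ⟨Y, rfl⟩
      show P * (sandwich' P Y) * P = sandwich' P Y
      show P * (P * (Y * P)) * P = P * (Y * P)
      have h1 : P * (P * (Y * P)) * P = (P * P) * Y * (P * P) := by noncomm_ring
      rw [h1, hP2, mul_assoc]
    · intro h
      exact ⟨X, by show P * (X * P) = X; rw [← mul_assoc]; exact h⟩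
  have hTV : ∀ X ∈ V, T X ∈ V := fun X hX => (hmem _).mpr (hinv X ((hmem X).mp hX))
  set T' : V →ₗ[ℂ] V := T.restrict hTV with hT'
  have hPV : P ∈ V := (hmem P).mpr (by rw [hP2, hP2])
  obtain ⟨rP, hrP0, htP, hrPpos⟩ := psd_trace_real (proj_psd hP hP2)
  have hrP := hrPpos hPne
  set E : V →ₗ[ℂ] V := T' - LinearMap.id with hE
  have hnotsurj : ¬ Function.Surjective E := by
    intro hs
    obtain ⟨y, hy⟩ := hs ⟨P, hPV⟩
    have h1 : ((E y : V) : Mn n).trace = 0 := by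
      have h2 : ((E y : V) : Mn n) = T (y : Mn n) - (y : Mn n) := by
        simp [hE, hT', LinearMap.sub_apply, LinearMap.restrict_apply]
      rw [h2, trace_sub, hTtp, sub_self]
    rw [hy] at h1
    have : (rP : ℂ) = 0 := by rw [← htP]; exact h1
    exact hrP.ne' (by exact_mod_cast this)
  have hnotinj : ¬ Function.Injective E := fun hinj =>
    hnotsurj ((LinearMap.injective_iff_surjective).mp hinj)
  have hex : ∃ x : V, x ≠ 0 ∧ T' x = x := by
    obtain ⟨a, b, hab, hne⟩ := Function.not_injective_iff.mp hnotinj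
    refine ⟨a - b, sub_ne_zero.mpr hne, ?_⟩
    have h3 : E (a - b) = 0 := by
      rw [map_sub, hab, sub_self]
    have h4 : T' (a - b) - (a - b) = 0 := by
      simpa [hE, LinearMap.sub_apply] using h3
    exact sub_eq_zero.mp h4
  obtain ⟨x, hx0, hxfix⟩ := hex
  set X := (x : Mn n) with hXdef
  have hX0 : X ≠ 0 := fun h => hx0 (Subtype.ext h)
  have hXfix : T X = X := by
    have := congrArg (Subtype.val) hxfix
    simpa [hT', LinearMap.restrict_apply] using this
  have hXV : P * X * P = X := (hmem X).mp x.2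
  have hconj : P * Xᴴ * P = Xᴴ := by
    conv_rhs => rw [← hXV]
    rw [conjTranspose_mul, conjTranspose_mul, hP.eq, ← mul_assoc]
  have hXHfix : T Xᴴ = Xᴴ := by rw [hTstar, hXfix]
  -- pick a nonzero Hermitian fixed point in V
  have hex2 : ∃ d : Mn n, d.IsHermitian ∧ d ≠ 0 ∧ T d = d ∧ P * d * P = d := by
    by_cases hA1 : X + Xᴴ = 0
    · refine ⟨Complex.I • (X - Xᴴ), ?_, ?_, ?_, ?_⟩
      · show _ᴴ = _
        rw [conjTranspose_smul, conjTranspose_sub, conjTranspose_conjTranspose]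
        have hsI : (star Complex.I) = -Complex.I := by
          simp [Complex.star_def, Complex.conj_I]
        rw [hsI, neg_smul, smul_sub, smul_sub, neg_sub]
      · intro h
        apply hX0
        have h5 : X - Xᴴ = 0 := by
          rcases smul_eq_zero.mp h with h' | h'
          · exact absurd h' Complex.I_ne_zero
          · exact h'
        have h6 : (2 : ℂ) • X = 0 := by
          have := congrArg₂ (· + ·) hA1 h5
          simpa [two_smul] using this
        rcases smul_eq_zero.mp h6 with h' | h'
        · exact absurd h' two_ne_zero
        · exact h' 
      · rw [_root_.map_smul, map_sub, hXfix, hXHfix]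
      · rw [mul_smul_comm, smul_mul_assoc, mul_sub, sub_mul, hXV, hconj]
    · refine ⟨X + Xᴴ, ?_, hA1, ?_, ?_⟩
      · show _ᴴ = _
        rw [conjTranspose_add, conjTranspose_conjTranspose, add_comm]
      · rw [map_add, hXfix, hXHfix]
      · rw [mul_add, add_mul, hXV, hconj]
  obtain ⟨d, hd, hdne, hdfix, hdV⟩ := hex2
  obtain ⟨hfp, hfm⟩ := fixed_parts hTpos hTtp hd hdfix
  have hQd : ((1 : Mn n) - P) * d = 0 := by
    have hPd : P * d = d := by
      conv_lhs => rw [← hdV]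
      calc P * (P * d * P) = (P * P) * d * P := by noncomm_ring
        _ = P * d * P := by rw [hP2]
        _ = d := hdV
    rw [sub_mul, one_mul, hPd, sub_self]
  have hdQ : d * ((1 : Mn n) - P) = 0 := by
    have hdP : d * P = d := by
      conv_lhs => rw [← hdV]
      calc (P * d * P) * P = P * d * (P * P) := by noncomm_ring
        _ = P * d * P := by rw [hP2]
        _ = d := hdV
    rw [mul_sub, mul_one, hdP, sub_self]
  have hVpart : ∀ f : ℝ → ℝ, f 0 = 0 → P * Phi hd f * P = Phi hd f := by
    intro f hf0
    have h1 : ((1:Mn n) - P) * Phi hd f = 0 := mul_Phi_eq_zero hd f hQd hf0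
    have h2 : Phi hd f * ((1:Mn n) - P) = 0 := Phi_mul_eq_zero hd f hdQ hf0
    have h3 : P * Phi hd f = Phi hd f := by
      have := sub_eq_zero.mp (by rw [← h1, sub_mul, one_mul] : Phi hd f - P * Phi hd f = 0)
      exact this.symm
    have h4 : Phi hd f * P = Phi hd f := by
      have := sub_eq_zero.mp (by rw [← h2, mul_sub, mul_one] : Phi hd f - Phi hd f * P = 0)
      exact this.symm
    rw [h3, h4]
  have hexmu : ∃ mu : Mn n, mu.PosSemidef ∧ mu ≠ 0 ∧ T mu = mu ∧ P * mu * P = mu := by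
    by_cases hp0 : Phi hd fplus = 0
    · refine ⟨Phi hd fminus, Phi_psd hd _ fun i => fminus_nonneg _, ?_, hfm,
        hVpart fminus fminus_zero⟩
      intro h
      apply hdne
      rw [← parts_sub hd, hp0, h, sub_zero]
    · exact ⟨Phi hd fplus, Phi_psd hd _ fun i => fplus_nonneg _, hp0, hfp,
        hVpart fplus fplus_zero⟩
  obtain ⟨mu, hmu, hmune, hmufix, hmuV⟩ := hexmu
  obtain ⟨r, hr0, hrt, hrpos⟩ := psd_trace_real hmu
  have hr := hrpos hmune
  refine ⟨((r⁻¹ : ℝ) : ℂ) • mu, psd_smul_real hmu (inv_nonneg.mpr hr0), ?_, ?_, ?_⟩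
  · rw [trace_smul, hrt, smul_eq_mul]
    rw [← Complex.ofReal_mul, inv_mul_cancel₀ hr.ne', Complex.ofReal_one]
  · rw [_root_.map_smul, hmufix]
  · rw [mul_smul_comm, smul_mul_assoc, hmuV]
-- Mp is positive / trace preserving / star preserving
lemma mp_facts {M M' Mp : Module.End ℂ (Mn n)} (hM : IsChannel M) (hM' : IsChannel M')
    {p : ℝ} (hp0 : 0 < p) (hp1 : p ≤ 1)
    (hMp : Mp = (p : ℂ) • M + ((1 : ℂ) - (p : ℂ)) • M') :
    IsPosMap Mp ∧ IsTracePreserving Mp ∧ (∀ X : Mn n, Mp Xᴴ = (Mp X)ᴴ) := by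
  have happ : ∀ X : Mn n, Mp X = (p:ℂ) • M X + (((1 - p : ℝ)):ℂ) • M' X := by
    intro X
    rw [hMp]
    push_cast
    simp [LinearMap.add_apply, LinearMap.smul_apply]
  refine ⟨?_, ?_, ?_⟩
  · intro X hX
    rw [happ]
    exact (psd_smul_real (channel_posMap hM X hX) hp0.le).add
      (psd_smul_real (channel_posMap hM' X hX) (by linarith))
  · intro X
    rw [happ, trace_add, trace_smul, trace_smul, channel_tp hM, channel_tp hM',
      smul_eq_mul, smul_eq_mul]
    push_cast
    try ring
  · intro X
    rw [happ, happ, conjTranspose_add, conjTranspose_smul, conjTranspose_smul,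
      channel_star hM, channel_star hM']
    simp [Complex.star_def, Complex.conj_ofReal]

lemma dominate {M M' Mp : Module.End ℂ (Mn n)}
    (hMpos : IsPosMap M) (hMtp : IsTracePreserving M) (hMstar : ∀ X : Mn n, M Xᴴ = (M X)ᴴ)
    (hM'pos : IsPosMap M')
    {ρ : Mn n} (hρ : ρ.PosSemidef) (hρtr : ρ.trace = 1)
    (hρuniq : ∀ σ : Mn n, σ.PosSemidef → σ.trace = 1 → M σ = σ → σ = ρ)
    {p : ℝ} (hp0 : 0 < p) (hp1 : p ≤ 1)
    (hMp : Mp = (p : ℂ) • M + ((1 : ℂ) - (p : ℂ)) • M')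
    {σ : Mn n} (hσ : σ.PosSemidef) (hσtr : σ.trace = 1) (hσfix : Mp σ = σ) :
    ∃ c : ℝ, 0 < c ∧ c ≤ 1 ∧ (σ - (c : ℂ) • ρ).PosSemidef := by
  have hσne : σ ≠ 0 := by
    intro h
    rw [h, trace_zero] at hσtr
    exact zero_ne_one hσtr
  have hdom : (σ - (p : ℂ) • M σ).PosSemidef := by
    have happ : Mp σ = (p:ℂ) • M σ + (((1 - p : ℝ)):ℂ) • M' σ := by
      rw [hMp]; push_cast; simp [LinearMap.add_apply, LinearMap.smul_apply]
    have h2 : (p:ℂ) • M σ + (((1 - p : ℝ)):ℂ) • M' σ = σ := by rw [← happ, hσfix]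
    have h1 : σ - (p:ℂ) • M σ = (((1 - p : ℝ)):ℂ) • M' σ := by
      nth_rewrite 1 [← h2]
      abel
    rw [h1]
    exact psd_smul_real (hM'pos σ hσ) (by linarith)
  obtain ⟨P, hPh, hP2, hPne, ⟨c₀, hc₀, hcP⟩, hinv⟩ := supp_full M hMpos hσ hσne hp0 hdom
  obtain ⟨ς, hςpsd, hςtr, hςfix, hςV⟩ := exists_fixed_state M hMpos hMtp hMstar P hPh hP2 hPne hinv
  have hςρ : ς = ρ := hρuniq ς hςpsd hςtr hςfix
  have hρV : P * ρ * P = ρ := by rw [← hςρ]; exact hςV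
  have hPρ : (P - ρ).PosSemidef := by
    have h := psd_le_proj hρ hPh hP2 hρV (r := 1) (by rw [hρtr]; norm_num)
    rwa [Complex.ofReal_one, one_smul] at h
  refine ⟨min c₀ 1, lt_min hc₀ one_pos, min_le_right _ _, ?_⟩
  have key : σ - ((min c₀ 1 : ℝ):ℂ) • ρ
      = (σ - (c₀:ℂ) • P) + ((c₀ - min c₀ 1 : ℝ):ℂ) • P
        + ((min c₀ 1 : ℝ):ℂ) • (P - ρ) := by
    push_cast
    module
  rw [show ((min c₀ 1 : ℝ):ℂ) = (((min c₀ 1 : ℝ)):ℂ) from rfl] at *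
  rw [key]
  exact ((hcP.add (psd_smul_real (proj_psd hPh hP2) (by simp [min_le_left]))).add
    (psd_smul_real hPρ (le_min hc₀.le zero_le_one)))

lemma uniq_pair {M M' Mp : Module.End ℂ (Mn n)}
    (hMpos : IsPosMap M) (hMtp : IsTracePreserving M) (hMstar : ∀ X : Mn n, M Xᴴ = (M X)ᴴ)
    (hM'pos : IsPosMap M') (hMppos : IsPosMap Mp) (hMptp : IsTracePreserving Mp)
    {ρ : Mn n} (hρ : ρ.PosSemidef) (hρtr : ρ.trace = 1)
    (hρuniq : ∀ σ : Mn n, σ.PosSemidef → σ.trace = 1 → M σ = σ → σ = ρ)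
    {p : ℝ} (hp0 : 0 < p) (hp1 : p ≤ 1)
    (hMp : Mp = (p : ℂ) • M + ((1 : ℂ) - (p : ℂ)) • M')
    {σ τ : Mn n} (hσ : σ.PosSemidef) (hσtr : σ.trace = 1) (hσfix : Mp σ = σ)
    (hτ : τ.PosSemidef) (hτtr : τ.trace = 1) (hτfix : Mp τ = τ) :
    σ = τ := by
  by_contra hne
  have hδh : (σ - τ).IsHermitian := hσ.1.sub hτ.1
  have hδfix : Mp (σ - τ) = σ - τ := by rw [map_sub, hσfix, hτfix]
  obtain ⟨hfp, hfm⟩ := fixed_parts hMppos hMptp hδh hδfix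
  have hppsd : (Phi hδh fplus).PosSemidef := Phi_psd hδh _ fun i => fplus_nonneg _
  have hmpsd : (Phi hδh fminus).PosSemidef := Phi_psd hδh _ fun i => fminus_nonneg _
  obtain ⟨a, ha0, hat, hapos⟩ := psd_trace_real hppsd
  obtain ⟨b, hb0, hbt, hbpos⟩ := psd_trace_real hmpsd
  have htr0 : (σ - τ).trace = 0 := by rw [trace_sub, hσtr, hτtr, sub_self]
  have hab : a = b := by
    have h1 : (Phi hδh fplus).trace - (Phi hδh fminus).trace = 0 := by
      rw [← trace_sub, parts_sub hδh, htr0]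
    rw [hat, hbt] at h1
    have : (a:ℂ) = (b:ℂ) := by linear_combination h1
    exact_mod_cast this
  have hpne : Phi hδh fplus ≠ 0 := by
    intro h
    have hbz : b = 0 := by
      have haz : a = 0 := by
        have : (Phi hδh fplus).trace = 0 := by rw [h, trace_zero]
        rw [hat] at this
        exact_mod_cast this
      rw [← hab, haz]
    have hmz : Phi hδh fminus = 0 := psd_trace_zero hmpsd (by rw [hbt, hbz]; simp)
    apply hne
    have := parts_sub hδh
    rw [h, hmz, sub_zero] at this
    exact sub_eq_zero.mp this.symm
  have hapos' : 0 < a := hapos hpne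
  have hbpos' : 0 < b := by rw [← hab]; exact hapos'
  -- normalized states
  set σ₁ := ((a⁻¹ : ℝ):ℂ) • Phi hδh fplus with hσ₁
  set σ₂ := ((a⁻¹ : ℝ):ℂ) • Phi hδh fminus with hσ₂
  have hσ₁psd : σ₁.PosSemidef := psd_smul_real hppsd (inv_nonneg.mpr ha0)
  have hσ₂psd : σ₂.PosSemidef := psd_smul_real hmpsd (inv_nonneg.mpr ha0)
  have hσ₁tr : σ₁.trace = 1 := by
    rw [hσ₁, trace_smul, hat, smul_eq_mul, ← Complex.ofReal_mul,
      inv_mul_cancel₀ hapos'.ne', Complex.ofReal_one]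
  have hσ₂tr : σ₂.trace = 1 := by
    rw [hσ₂, trace_smul, hbt, smul_eq_mul, ← Complex.ofReal_mul, hab,
      inv_mul_cancel₀ hbpos'.ne', Complex.ofReal_one]
  have hσ₁fix : Mp σ₁ = σ₁ := by rw [hσ₁, _root_.map_smul, hfp]
  have hσ₂fix : Mp σ₂ = σ₂ := by rw [hσ₂, _root_.map_smul, hfm]
  obtain ⟨c₁, hc₁, _, hd₁⟩ := dominate hMpos hMtp hMstar hM'pos hρ hρtr hρuniq hp0 hp1 hMp
    hσ₁psd hσ₁tr hσ₁fix
  obtain ⟨c₂, hc₂, _, hd₂⟩ := dominate hMpos hMtp hMstar hM'pos hρ hρtr hρuniq hp0 hp1 hMp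
    hσ₂psd hσ₂tr hσ₂fix
  -- orthogonality
  have horth : σ₁ * σ₂ = 0 := by
    rw [hσ₁, hσ₂, smul_mul_assoc, mul_smul_comm, Phi_mul,
      Phi_congr hδh _ (fun _ => 0) (fun i => fplus_mul_fminus _), Phi_zero, smul_zero, smul_zero]
  -- trace of ρ * ρ is positive
  have hq : ∃ q : ℝ, 0 < q ∧ (ρ * ρ).trace = (q:ℂ) := by
    have hρρ : ρ * ρ = Phi hρ.1 (fun x => id x * id x) := by rw [← Phi_mul, Phi_id]
    have htr : (ρ * ρ).trace = ((∑ i, (hρ.1.eigenvalues i) * (hρ.1.eigenvalues i) : ℝ) : ℂ) := by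
      rw [hρρ]; exact Phi_trace hρ.1 _
    refine ⟨_, ?_, htr⟩
    have hsum1 : (∑ i, hρ.1.eigenvalues i) = 1 := by
      have h1 : ρ.trace = ((∑ i, hρ.1.eigenvalues i : ℝ):ℂ) := by
        conv_lhs => rw [← Phi_id hρ.1]
        exact Phi_trace hρ.1 id
      rw [hρtr] at h1
      exact_mod_cast h1.symm
    have hex : ∃ i, hρ.1.eigenvalues i ≠ 0 := by
      by_contra h
      push_neg at h
      rw [Finset.sum_congr rfl fun i _ => h i] at hsum1
      simp at hsum1
    obtain ⟨i, hi⟩ := hex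
    exact Finset.sum_pos' (fun j _ => mul_self_nonneg _)
      ⟨i, Finset.mem_univ i, mul_self_pos.mpr hi⟩
  obtain ⟨q, hqpos, hqt⟩ := hq
  obtain ⟨u₁, hu₁0, hu₁t⟩ := psd_mul_trace_real hd₁ hσ₂psd
  obtain ⟨u₂, hu₂0, hu₂t⟩ := psd_mul_trace_real hρ hd₂
  -- expand traces
  have tsubL : ∀ (A B C : Mn n) (t : ℂ), ((A - t • B) * C).trace
      = (A * C).trace - t * (B * C).trace := by
    intro A B C t
    rw [sub_mul, smul_mul_assoc, trace_sub, trace_smul, smul_eq_mul]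
  have tsubR : ∀ (A B C : Mn n) (t : ℂ), (A * (B - t • C)).trace
      = (A * B).trace - t * (A * C).trace := by
    intro A B C t
    rw [mul_sub, mul_smul_comm, trace_sub, trace_smul, smul_eq_mul]
  have hexp1 : ((σ₁ - (c₁:ℂ) • ρ) * σ₂).trace
      = (σ₁ * σ₂).trace - (c₁:ℂ) * (ρ * σ₂).trace := tsubL _ _ _ _
  have hexp2 : (ρ * (σ₂ - (c₂:ℂ) • ρ)).trace
      = (ρ * σ₂).trace - (c₂:ℂ) * (ρ * ρ).trace := tsubR _ _ _ _
  have h0 : (σ₁ * σ₂).trace = 0 := by rw [horth, trace_zero]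
  rw [hu₁t, h0, zero_sub] at hexp1
  rw [hu₂t, hqt] at hexp2
  -- hexp1 : u₁ = -(c₁ * (ρσ₂).trace) ; hexp2 : u₂ = (ρσ₂).trace - c₂ q
  have hρσ₂ : (ρ * σ₂).trace = ((u₂ + c₂ * q : ℝ):ℂ) := by
    push_cast
    linear_combination -hexp2
  rw [hρσ₂] at hexp1
  have : u₁ = -(c₁ * (u₂ + c₂ * q)) := by exact_mod_cast hexp1
  have hpos2 : 0 < c₁ * (u₂ + c₂ * q) :=
    mul_pos hc₁ (by nlinarith)
  linarith

end StmtAux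

open StmtAux in
/-- (Burgarth et al.) If `M` is an ergodic quantum channel with unique
invariant state `ρ_*` and `M'` is any quantum channel, then for every `p ∈ (0,1]` the
randomization `M_p = pM + (1−p)M'` is ergodic, and its unique invariant state satisfies
`ρ_{*,p} = π_p ρ_* + (1−π_p)σ_p` for some `π_p ∈ (0,1]` and some state `σ_p`. -/
theorem stmt13 {n : ℕ} (M M' : Module.End ℂ (Mn n))
    (hM : IsChannel M) (hM' : IsChannel M')
    (ρstar : Mn n) (hρpsd : ρstar.PosSemidef) (hρtr : ρstar.trace = 1)
    (hρfix : M ρstar = ρstar)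
    (hρuniq : ∀ σ : Mn n, σ.PosSemidef → σ.trace = 1 → M σ = σ → σ = ρstar)
    (p : ℝ) (hp0 : 0 < p) (hp1 : p ≤ 1)
    (Mp : Module.End ℂ (Mn n)) (hMp : Mp = (p : ℂ) • M + ((1 : ℂ) - (p : ℂ)) • M') :
    ∃ ρp : Mn n,
      (ρp.PosSemidef ∧ ρp.trace = 1 ∧ Mp ρp = ρp) ∧
      (∀ σ : Mn n, σ.PosSemidef → σ.trace = 1 → Mp σ = σ → σ = ρp) ∧
      (∃ c : ℝ, 0 < c ∧ c ≤ 1 ∧ ∃ σp : Mn n, σp.PosSemidef ∧ σp.trace = 1 ∧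
        ρp = (c : ℂ) • ρstar + ((1 : ℂ) - (c : ℂ)) • σp) := by
  rcases Nat.eq_zero_or_pos n with h0 | hn
  · exfalso
    subst h0
    have h : ρstar.trace = 0 := by
      rw [Matrix.trace]
      simp
    rw [hρtr] at h
    exact one_ne_zero h
  obtain ⟨hMppos, hMptp, hMpstar⟩ := mp_facts hM hM' hp0 hp1 hMp
  have hMpos := channel_posMap hM
  have hMtp := channel_tp hM
  have hMstar := channel_star hM
  have hM'pos := channel_posMap hM'
  have h1ne : (1 : Mn n) ≠ 0 := by
    intro h
    have h2 := congrFun (congrFun h ⟨0, hn⟩) ⟨0, hn⟩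
    simp [Matrix.one_apply] at h2
  obtain ⟨ρp, hρppsd, hρptr, hρpfix, -⟩ := exists_fixed_state Mp hMppos hMptp hMpstar 1
    Matrix.isHermitian_one (one_mul 1) h1ne
    (fun X _ => by rw [one_mul, mul_one])
  refine ⟨ρp, ⟨hρppsd, hρptr, hρpfix⟩, ?_, ?_⟩
  · intro σ hσ hσtr hσfix
    exact uniq_pair hMpos hMtp hMstar hM'pos hMppos hMptp hρpsd hρtr hρuniq hp0 hp1 hMp
      hσ hσtr hσfix hρppsd hρptr hρpfix
  · obtain ⟨c, hc0, hc1, hcpsd⟩ := dominate hMpos hMtp hMstar hM'pos hρpsd hρtr hρuniq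
      hp0 hp1 hMp hρppsd hρptr hρpfix
    rcases hc1.lt_or_eq with hlt | heq
    · have hne : (1 - c : ℝ) ≠ 0 := by linarith
      refine ⟨c, hc0, hc1, (((1 - c)⁻¹ : ℝ) : ℂ) • (ρp - (c : ℂ) • ρstar), ?_, ?_, ?_⟩
      · exact psd_smul_real hcpsd (inv_nonneg.mpr (by linarith))
      · rw [trace_smul, trace_sub, trace_smul, hρptr, hρtr, smul_eq_mul, smul_eq_mul, mul_one]
        rw [show (1 : ℂ) - (c : ℂ) = ((1 - c : ℝ) : ℂ) by push_cast; ring]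
        rw [← Complex.ofReal_mul, inv_mul_cancel₀ hne, Complex.ofReal_one]
      · have hkey : ((1 : ℂ) - (c : ℂ)) • ((((1 - c)⁻¹ : ℝ) : ℂ) • (ρp - (c : ℂ) • ρstar))
            = ρp - (c : ℂ) • ρstar := by
          rw [smul_smul, show (1 : ℂ) - (c : ℂ) = ((1 - c : ℝ) : ℂ) by push_cast; ring,
            ← Complex.ofReal_mul, mul_inv_cancel₀ hne, Complex.ofReal_one, one_smul]
        rw [hkey]
        abel
    · have hz : ρp - (c : ℂ) • ρstar = 0 := by
        apply psd_trace_zero hcpsd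
        rw [trace_sub, trace_smul, hρptr, hρtr, heq]
        simp
      have hρpρ : ρp = (c : ℂ) • ρstar := sub_eq_zero.mp hz
      refine ⟨1, one_pos, le_refl 1, ρstar, hρpsd, hρtr, ?_⟩
      rw [hρpρ, heq]
      push_cast
      simp
end
end

section
/- Let M ∈ M_N(ℂ) and suppose there exist vectors π, e ∈ ℂ^N with Mπ = π, M*e = e, ⟨e, π⟩ = 1, and such that 1 is a simple eigenvalue of M (ker(M − I) is one-dimensional and ker((M − I)²) = ker(M − I)). Let t, u ∈ ℂ^N with ⟨e, t⟩ ≠ 0 and ⟨u, π⟩ ≠ 0. Then I − M + t u* is invertible, and a matrix G ∈ M_N(ℂ) is a generalized inverse of I − M if and only if G = (I − M + t u*)^{−1} + π f* + g e* for some vectors f, g ∈ ℂ^N. -/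
open Matrix

noncomputable section

section helpers

variable {n : Type*} [Fintype n] [DecidableEq n]

lemma mul_vecMulVec' (A : Matrix n n ℂ) (x y : n → ℂ) :
    A * vecMulVec x y = vecMulVec (A.mulVec x) y := by
  ext i j
  simp [mul_apply, vecMulVec_apply, mulVec, dotProduct, Finset.sum_mul, mul_assoc]

lemma vecMulVec_mul' (A : Matrix n n ℂ) (x y : n → ℂ) :
    vecMulVec x y * A = vecMulVec x (vecMul y A) := by
  ext i j
  simp [mul_apply, vecMulVec_apply, vecMul, dotProduct, Finset.mul_sum, mul_assoc]

lemma vecMulVec_mulVec' (x y v : n → ℂ) :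
    (vecMulVec x y).mulVec v = (y ⬝ᵥ v) • x := by
  ext i
  simp only [mulVec, vecMulVec_apply, dotProduct, Pi.smul_apply, smul_eq_mul,
    Finset.sum_mul]
  exact Finset.sum_congr rfl fun k _ => by ring

lemma vecMul_vecMulVec' (w x y : n → ℂ) :
    vecMul w (vecMulVec x y) = (w ⬝ᵥ x) • y := by
  ext j
  simp only [vecMul, vecMulVec_apply, dotProduct, Pi.smul_apply, smul_eq_mul,
    Finset.sum_mul]
  exact Finset.sum_congr rfl fun k _ => by ring

lemma vecMulVec_smul_left (c : ℂ) (x y : n → ℂ) :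
    vecMulVec (c • x) y = c • vecMulVec x y := by
  ext i j; simp [vecMulVec_apply, mul_assoc]

lemma vecMulVec_smul_right (c : ℂ) (x y : n → ℂ) :
    vecMulVec x (c • y) = c • vecMulVec x y := by
  ext i j; simp [vecMulVec_apply]; ring

lemma vecMulVec_zero_left (y : n → ℂ) : vecMulVec (0 : n → ℂ) y = 0 := by
  ext i j; simp [vecMulVec_apply]

lemma vecMulVec_zero_right (x : n → ℂ) : vecMulVec x (0 : n → ℂ) = 0 := by
  ext i j; simp [vecMulVec_apply]

end helpers

/-- (Hunter-type characterization of generalized inverses) Let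
`M ∈ M_N(ℂ)` with `Mπ = π`, `M*e = e`, `⟨e,π⟩ = 1`, and with `1` a simple eigenvalue of
`M`. For `t, u` with `⟨e,t⟩ ≠ 0` and `⟨u,π⟩ ≠ 0`, the matrix `I − M + tu*` is invertible
and `G` is a generalized inverse of `I − M` iff `G = (I − M + tu*)^{−1} + πf* + ge*` for
some vectors `f`, `g`. -/
theorem stmt15 {N : ℕ} (M : Matrix (Fin N) (Fin N) ℂ)
    (π e : Fin N → ℂ)
    (hπ : M.mulVec π = π) (he : Mᴴ.mulVec e = e)
    (heπ : star e ⬝ᵥ π = 1)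
    (hker : ∀ v : Fin N → ℂ, (M - 1).mulVec v = 0 → ∃ c : ℂ, v = c • π)
    (hsimple : ∀ v : Fin N → ℂ,
      ((M - 1) * (M - 1)).mulVec v = 0 → (M - 1).mulVec v = 0)
    (t u : Fin N → ℂ) (ht : star e ⬝ᵥ t ≠ 0) (hu : star u ⬝ᵥ π ≠ 0) :
    IsUnit (1 - M + Matrix.vecMulVec t (star u)) ∧
    ∀ G : Matrix (Fin N) (Fin N) ℂ,
      (1 - M) * G * (1 - M) = 1 - M ↔
        ∃ f g : Fin N → ℂ,
          G = (1 - M + Matrix.vecMulVec t (star u))⁻¹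
              + Matrix.vecMulVec π (star f) + Matrix.vecMulVec g (star e) := by
  set B : Matrix (Fin N) (Fin N) ℂ := 1 - M with hB
  set T : Matrix (Fin N) (Fin N) ℂ := vecMulVec t (star u) with hT
  set A : Matrix (Fin N) (Fin N) ℂ := B + T with hA
  have hBπ : B.mulVec π = 0 := by
    rw [hB, sub_mulVec, one_mulVec, hπ, sub_self]
  have heM : vecMul (star e) M = star e := by
    have h1 := mulVec_conjTranspose M e
    rw [he] at h1
    have h2 := congrArg star h1
    simpa using h2.symm
  have heB : vecMul (star e) B = 0 := by
    rw [hB, vecMul_sub, vecMul_one, heM, sub_self]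
  have hBπmat : ∀ y : Fin N → ℂ, B * vecMulVec π y = 0 := fun y => by
    rw [mul_vecMulVec', hBπ, vecMulVec_zero_left]
  have heBmat : ∀ x : Fin N → ℂ, vecMulVec x (star e) * B = 0 := fun x => by
    rw [vecMulVec_mul', heB, vecMulVec_zero_right]
  -- A is invertible
  have hAunit : IsUnit A := by
    rw [← Matrix.mulVec_injective_iff_isUnit]
    have hzero : ∀ v : Fin N → ℂ, A.mulVec v = 0 → v = 0 := by
      intro v hv
      rw [hA, add_mulVec, hT, vecMulVec_mulVec'] at hv
      have he0 : star e ⬝ᵥ (B.mulVec v + (star u ⬝ᵥ v) • t) = 0 := by rw [hv]; simp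
      rw [dotProduct_add, dotProduct_mulVec, heB, dotProduct_smul] at he0
      simp only [zero_dotProduct, zero_add, smul_eq_mul] at he0
      have huv : star u ⬝ᵥ v = 0 := by
        rcases mul_eq_zero.mp he0 with h | h
        · exact h
        · exact absurd h ht
      rw [huv, zero_smul, add_zero] at hv
      have hMv : (M - 1).mulVec v = 0 := by
        have hMB : M - 1 = -B := by rw [hB]; abel
        rw [hMB, neg_mulVec, hv, neg_zero]
      obtain ⟨c, hc⟩ := hker v hMv
      have hc0 : star u ⬝ᵥ (c • π) = 0 := by rw [← hc]; exact huv
      rw [dotProduct_smul, smul_eq_mul] at hc0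
      rcases mul_eq_zero.mp hc0 with h | h
      · rw [hc, h, zero_smul]
      · exact absurd h hu
    intro v w hvw
    have hsub : A.mulVec (v - w) = 0 := by
      rw [mulVec_sub, hvw, sub_self]
    exact sub_eq_zero.mp (hzero _ hsub)
  have hdet : IsUnit A.det := (isUnit_iff_isUnit_det A).mp hAunit
  have hAAinv : A * A⁻¹ = 1 := mul_nonsing_inv A hdet
  have hAinvA : A⁻¹ * A = 1 := nonsing_inv_mul A hdet
  -- A⁻¹ t = (u*π)⁻¹ • π
  have hAπ : A.mulVec π = (star u ⬝ᵥ π) • t := by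
    rw [hA, add_mulVec, hBπ, zero_add, hT, vecMulVec_mulVec']
  have hInvt : A⁻¹.mulVec t = (star u ⬝ᵥ π)⁻¹ • π := by
    have h1 : A⁻¹.mulVec (A.mulVec π) = π := by
      rw [mulVec_mulVec, hAinvA, one_mulVec]
    rw [hAπ, mulVec_smul] at h1
    have h2 := congrArg (fun z => (star u ⬝ᵥ π)⁻¹ • z) h1
    simpa [smul_smul, inv_mul_cancel₀ hu] using h2
  -- u* A⁻¹ = (e*t)⁻¹ • e*
  have heA : vecMul (star e) A = (star e ⬝ᵥ t) • star u := by
    rw [hA, vecMul_add, heB, zero_add, hT, vecMul_vecMulVec']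
  have hInvu : vecMul (star u) A⁻¹ = (star e ⬝ᵥ t)⁻¹ • star e := by
    have h1 : vecMul (vecMul (star e) A) A⁻¹ = star e := by
      rw [vecMul_vecMul, hAAinv, vecMul_one]
    rw [heA, smul_vecMul] at h1
    have h2 := congrArg (fun z => (star e ⬝ᵥ t)⁻¹ • z) h1
    simpa [smul_smul, inv_mul_cancel₀ ht] using h2
  -- T A⁻¹ T = T
  have hTAT : T * A⁻¹ * T = T := by
    rw [hT, vecMulVec_mul', hInvu, vecMulVec_smul_right, Matrix.smul_mul,
      vecMulVec_mul', vecMul_vecMulVec', vecMulVec_smul_right, smul_smul,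
      inv_mul_cancel₀ ht, one_smul]
  -- B A⁻¹ B = B
  have hBAB : B * A⁻¹ * B = B := by
    have hBeq : B = A - T := by rw [hA]; abel
    have expand : (A - T) * A⁻¹ * (A - T)
        = A * A⁻¹ * A - A * A⁻¹ * T - T * A⁻¹ * A + T * A⁻¹ * T := by
      noncomm_ring
    have h1 : A * A⁻¹ * A = A := by rw [hAAinv, one_mul]
    have h2 : A * A⁻¹ * T = T := by rw [hAAinv, one_mul]
    have h3 : T * A⁻¹ * A = T := by rw [mul_assoc, hAinvA, mul_one]
    rw [hBeq, expand, h1, h2, h3, hTAT]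
    abel
  constructor
  · exact hAunit
  intro G
  constructor
  · -- forward: G is a g-inverse → G has the prescribed form
    intro hG
    set D : Matrix (Fin N) (Fin N) ℂ := G - A⁻¹ with hD
    have hBDB : B * D * B = 0 := by
      have hx : B * D * B = B * G * B - B * A⁻¹ * B := by rw [hD]; noncomm_ring
      rw [hx, hG, hBAB, sub_self]
    have hADA : A * D * A
        = vecMulVec ((B * D).mulVec t) (star u)
          + vecMulVec t (vecMul (star u) (D * A)) := by
      have expand : A * D * A = B * D * B + B * D * T + T * (D * A) := by
        rw [hA]; noncomm_ring
      rw [expand, hBDB, zero_add]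
      congr 1
      · rw [hT, mul_assoc, ← mul_vecMulVec' (B * D) t (star u), mul_assoc]
      · rw [hT, vecMulVec_mul']
    have hDeq : D = A⁻¹ * (A * D * A) * A⁻¹ := by
      rw [← mul_assoc, ← mul_assoc, hAinvA, one_mul, mul_assoc, hAAinv, mul_one]
    set a : Fin N → ℂ := vecMul (star u) (D * A) with ha
    set b : Fin N → ℂ := (B * D).mulVec t with hb
    refine ⟨star ((star u ⬝ᵥ π)⁻¹ • vecMul a A⁻¹), (star e ⬝ᵥ t)⁻¹ • A⁻¹.mulVec b, ?_⟩
    rw [star_star]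
    have hterm1 : A⁻¹ * vecMulVec b (star u) * A⁻¹
        = vecMulVec ((star e ⬝ᵥ t)⁻¹ • A⁻¹.mulVec b) (star e) := by
      rw [mul_vecMulVec', vecMulVec_mul', hInvu, vecMulVec_smul_right,
        ← vecMulVec_smul_left]
    have hterm2 : A⁻¹ * vecMulVec t a * A⁻¹
        = vecMulVec π ((star u ⬝ᵥ π)⁻¹ • vecMul a A⁻¹) := by
      rw [mul_vecMulVec', hInvt, vecMulVec_smul_left, Matrix.smul_mul,
        vecMulVec_mul', ← vecMulVec_smul_right]
    have hDval : D = vecMulVec π ((star u ⬝ᵥ π)⁻¹ • vecMul a A⁻¹)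
        + vecMulVec ((star e ⬝ᵥ t)⁻¹ • A⁻¹.mulVec b) (star e) := by
      rw [hDeq, hADA, mul_add, add_mul, hterm1, hterm2, add_comm]
    have hGD : G = A⁻¹ + D := by rw [hD]; abel
    rw [hGD, hDval, add_assoc]
  · -- backward: the prescribed form is a g-inverse
    rintro ⟨f, g, rfl⟩
    have h1 : B * vecMulVec π (star f) * B = 0 := by
      rw [hBπmat, Matrix.zero_mul]
    have h2 : B * vecMulVec g (star e) * B = 0 := by
      rw [mul_assoc, heBmat, Matrix.mul_zero]
    have expand : B * (A⁻¹ + vecMulVec π (star f) + vecMulVec g (star e)) * B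
        = B * A⁻¹ * B + B * vecMulVec π (star f) * B + B * vecMulVec g (star e) * B := by
      noncomm_ring
    rw [expand, h1, h2, hBAB, add_zero, add_zero]
end
end

section
/- Let T be an irreducible positive trace-preserving linear map on M_n and V ⊆ ℂⁿ a nonzero subspace. Then for every unit vector φ ∈ ℂⁿ, the hitting probability of V from φ equals 1: Σ_{r≥1} Tr(ℙT(ℚT)^{r−1}ρ_φ) = 1. -/
open Matrix
open scoped ComplexOrder

noncomputable section

section Helpers

open Filter Topology

variable {n : ℕ}

lemma diag_nonneg {X : Mn n} (hX : X.PosSemidef) (i : Fin n) : 0 ≤ X i i := by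
  have := hX.dotProduct_mulVec_nonneg (Pi.single i 1)
  simpa [dotProduct, Pi.single_apply] using this

lemma trace_nonneg' {X : Mn n} (hX : X.PosSemidef) : 0 ≤ X.trace := by
  apply Finset.sum_nonneg
  intro i _
  exact diag_nonneg hX i

lemma trace_real {X : Mn n} (hX : X.PosSemidef) : X.trace = ((X.trace.re : ℝ) : ℂ) := by
  have h := trace_nonneg' hX
  rw [Complex.le_def] at h
  simp only [Complex.zero_re, Complex.zero_im] at h
  exact Complex.ext (by simp) (by simp [← h.2])

open scoped MatrixOrder in
def Matrix.PosSemidef.sqrt {X : Mn n} (_hX : X.PosSemidef) : Mn n := CFC.sqrt X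

open scoped MatrixOrder in
lemma Matrix.PosSemidef.posSemidef_sqrt {X : Mn n} (hX : X.PosSemidef) : hX.sqrt.PosSemidef :=
  (CFC.sqrt_nonneg X).posSemidef

open scoped MatrixOrder in
lemma Matrix.PosSemidef.sqrt_mul_self {X : Mn n} (hX : X.PosSemidef) : hX.sqrt * hX.sqrt = X :=
  CFC.sqrt_mul_sqrt_self X hX.nonneg

lemma normSq_sum_eq {B : Mn n} :
    ((∑ i, ∑ j, Complex.normSq (B j i) : ℝ) : ℂ) = (Bᴴ * B).trace := by
  push_cast
  simp only [Matrix.trace, Matrix.diag, Matrix.mul_apply, conjTranspose_apply]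
  congr 1; ext i; congr 1; ext j
  rw [Complex.normSq_eq_conj_mul_self]; rfl

lemma psd_trace_zero {X : Mn n} (hX : X.PosSemidef) (h : X.trace = 0) : X = 0 := by
  have hs := hX.posSemidef_sqrt
  have hh : hX.sqrtᴴ = hX.sqrt := hs.isHermitian
  have hXs : hX.sqrtᴴ * hX.sqrt = X := by rw [hh]; exact hX.sqrt_mul_self
  have htr : ((∑ i, ∑ j, Complex.normSq (hX.sqrt j i) : ℝ) : ℂ) = 0 := by
    rw [normSq_sum_eq, hXs, h]
  have h2 : ∑ i, ∑ j, Complex.normSq (hX.sqrt j i) = 0 := by exact_mod_cast htr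
  have hB : hX.sqrt = 0 := by
    ext i j
    have h3 := Finset.sum_eq_zero_iff_of_nonneg
      (fun i (_ : i ∈ Finset.univ) => Finset.sum_nonneg fun j _ => Complex.normSq_nonneg (hX.sqrt j i)) |>.mp h2
    have h4 := Finset.sum_eq_zero_iff_of_nonneg
      (fun k (_ : k ∈ Finset.univ) => Complex.normSq_nonneg (hX.sqrt k j)) |>.mp (h3 j (Finset.mem_univ _))
    exact Complex.normSq_eq_zero.mp (h4 i (Finset.mem_univ _))
  rw [← hXs, hB, mul_zero]

-- kernel lemma
lemma sandwich_zero {Y E : Mn n} (hY : Y.PosSemidef) (hE : E.IsHermitian)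
    (h : E * Y * E = 0) : Y * E = 0 ∧ E * Y = 0 := by
  have hs := hY.posSemidef_sqrt
  have hh : hY.sqrtᴴ = hY.sqrt := hs.isHermitian
  have hYs : hY.sqrt * hY.sqrt = Y := hY.sqrt_mul_self
  have key : (hY.sqrt * E)ᴴ * (hY.sqrt * E) = 0 := by
    rw [conjTranspose_mul, hh, hE.eq]
    calc E * hY.sqrt * (hY.sqrt * E) = E * (hY.sqrt * hY.sqrt) * E := by
          rw [mul_assoc, mul_assoc, mul_assoc]
    _ = 0 := by rw [hYs, h]
  have hBE : hY.sqrt * E = 0 := conjTranspose_mul_self_eq_zero.mp key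
  have h1 : Y * E = 0 := by rw [← hYs, mul_assoc, hBE, mul_zero]
  refine ⟨h1, ?_⟩
  have : (Y * E)ᴴ = E * Y := by rw [conjTranspose_mul, hE.eq, hY.isHermitian.eq]
  rw [← this, h1, conjTranspose_zero]

-- trace split
lemma trace_split {P Q X : Mn n} (hPidem : P * P = P) (hQidem : Q * Q = Q)
    (hPQ : P + Q = 1) : (P * X * P).trace + (Q * X * Q).trace = X.trace := by
  have h1 : (P * X * P).trace = (P * X).trace := by
    rw [Matrix.trace_mul_cycle, hPidem]
  have h2 : (Q * X * Q).trace = (Q * X).trace := by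
    rw [Matrix.trace_mul_cycle, hQidem]
  rw [h1, h2, ← Matrix.trace_add, ← Matrix.add_mul, hPQ, one_mul]

-- real smul PSD
lemma psd_smul {X : Mn n} (hX : X.PosSemidef) {c : ℝ} (hc : 0 ≤ c) :
    ((c : ℂ) • X).PosSemidef := by
  refine posSemidef_iff_dotProduct_mulVec.mpr ⟨?_, ?_⟩
  · unfold Matrix.IsHermitian
    rw [conjTranspose_smul, hX.isHermitian.eq]
    congr 1
    simp
  · intro x
    have := hX.dotProduct_mulVec_nonneg x
    rw [Matrix.smul_mulVec, dotProduct_smul]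
    exact mul_nonneg (by exact_mod_cast Complex.zero_le_real.mpr hc) this

-- congruence
lemma psd_conj {X : Mn n} (hX : X.PosSemidef) (B : Mn n) : (B * X * Bᴴ).PosSemidef :=
  hX.mul_mul_conjTranspose_same B

lemma psd_conj' {X : Mn n} (hX : X.PosSemidef) {E : Mn n} (hE : E.IsHermitian) :
    (E * X * E).PosSemidef := by
  have := hX.mul_mul_conjTranspose_same E
  rwa [hE.eq] at this

-- psd difference + neg => zero
lemma psd_negsemidef {Z : Mn n} (hZ : Z.PosSemidef) (hZ' : (-Z).PosSemidef) : Z = 0 := by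
  apply psd_trace_zero hZ
  have h1 := trace_nonneg' hZ
  have h2 := trace_nonneg' hZ'
  rw [Matrix.trace_neg] at h2
  exact le_antisymm (by simpa using neg_nonneg.mp h2) h1

lemma conj_diag_conj (V : Mn n) (hV : V * star V = 1) (f g : Fin n → ℂ) :
    V * diagonal f * star V * (V * diagonal g * star V) = V * diagonal (f * g) * star V := by
  have hV' : star V * V = 1 := mul_eq_one_comm.mp hV
  calc V * diagonal f * star V * (V * diagonal g * star V)
      = V * (diagonal f * ((star V * V) * (diagonal g * star V))) := by
        simp only [mul_assoc]
    _ = V * diagonal (f * g) * star V := by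
        rw [hV', one_mul, ← mul_assoc (diagonal f), diagonal_mul_diagonal, ← mul_assoc]
        rfl

lemma conj_diag_psd (V : Mn n) (hV : V * star V = 1) {f : Fin n → ℝ} (hf : ∀ i, 0 ≤ f i) :
    (V * diagonal (fun i => (f i : ℂ)) * star V).PosSemidef := by
  have hd : (diagonal (fun i => (f i : ℂ))).PosSemidef := by
    rw [posSemidef_diagonal_iff]
    intro i
    exact_mod_cast Complex.zero_le_real.mpr (hf i)
  have := hd.mul_mul_conjTranspose_same V
  rwa [← star_eq_conjTranspose] at this

/-- Bound a Hermitian matrix between multiples of the identity. -/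
lemma herm_bound {H : Mn n} (hH : H.IsHermitian) :
    ∃ c : ℝ, 0 ≤ c ∧ ((c:ℂ) • 1 - H).PosSemidef ∧ ((c:ℂ) • 1 + H).PosSemidef := by
  set V : Mn n := (hH.eigenvectorUnitary : Mn n) with hVdef
  have hV : V * star V = 1 := mem_unitaryGroup_iff.mp hH.eigenvectorUnitary.2
  set d : Fin n → ℝ := hH.eigenvalues with hddef
  have hspec : H = V * diagonal (fun i => (d i : ℂ)) * star V := by
    rw [hVdef, hddef]
    simpa [Function.comp_def] using hH.spectral_theorem
  set c : ℝ := ∑ i, |d i| with hcdef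
  have hc : 0 ≤ c := Finset.sum_nonneg fun i _ => abs_nonneg _
  have hone : (c:ℂ) • (1 : Mn n) = V * diagonal (fun _ => (c:ℂ)) * star V := by
    have : (diagonal (fun _ => (c:ℂ)) : Mn n) = (c:ℂ) • 1 := by
      ext i j
      by_cases h : i = j <;> simp [diagonal, h, Matrix.one_apply]
    rw [this]
    rw [Matrix.mul_smul, Matrix.smul_mul, mul_one, hV]
  have h1 : ((c:ℂ) • 1 - H) = V * diagonal (fun i => ((c - d i : ℝ) : ℂ)) * star V := by
    rw [hone, hspec, ← Matrix.sub_mul, ← Matrix.mul_sub, diagonal_sub]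
    push_cast
    rfl
  have h2 : ((c:ℂ) • 1 + H) = V * diagonal (fun i => ((c + d i : ℝ) : ℂ)) * star V := by
    rw [hone, hspec, ← Matrix.add_mul, ← Matrix.mul_add, diagonal_add]
    push_cast
    rfl
  refine ⟨c, hc, ?_, ?_⟩
  · rw [h1]
    exact conj_diag_psd V hV fun i => sub_nonneg.mpr
      ((le_abs_self _).trans (Finset.single_le_sum (fun j _ => abs_nonneg (d j)) (Finset.mem_univ i)))
  · rw [h2]
    refine conj_diag_psd V hV fun i => ?_
    have : |d i| ≤ c := Finset.single_le_sum (fun j _ => abs_nonneg (d j)) (Finset.mem_univ i)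
    have := neg_abs_le (d i)
    linarith

/-- Support projection of a nonzero PSD matrix. -/
lemma support_proj {X : Mn n} (hX : X.PosSemidef) (hX0 : X ≠ 0) :
    ∃ R : Mn n, R.IsHermitian ∧ R * R = R ∧ R.PosSemidef ∧ X * R = X ∧ R * X = X ∧
      (∃ m : ℝ, 0 < m ∧ (X - (m:ℂ) • R).PosSemidef) ∧
      (∀ B : Mn n, B * X = 0 → B * R = 0) := by
  have hne : (Finset.univ : Finset (Fin n)).Nonempty := by
    rcases Nat.eq_zero_or_pos n with h | h
    · exfalso; apply hX0; subst h; ext i; exact Fin.elim0 i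
    · exact ⟨⟨0, h⟩, Finset.mem_univ _⟩
  have hH := hX.isHermitian
  set V : Mn n := (hH.eigenvectorUnitary : Mn n) with hVdef
  have hV : V * star V = 1 := mem_unitaryGroup_iff.mp hH.eigenvectorUnitary.2
  have hV' : star V * V = 1 := mul_eq_one_comm.mp hV
  set d : Fin n → ℝ := hH.eigenvalues with hddef
  have hdnn : ∀ i, 0 ≤ d i := hX.eigenvalues_nonneg
  have hspec : X = V * diagonal (fun i => (d i : ℂ)) * star V := by
    rw [hVdef, hddef]
    simpa [Function.comp_def] using hH.spectral_theorem
  set ind : Fin n → ℂ := fun i => if d i = 0 then 0 else 1 with hinddef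
  set R : Mn n := V * diagonal ind * star V with hRdef
  have hindreal : ind = fun i => (((fun i => if d i = 0 then (0:ℝ) else 1) i : ℝ) : ℂ) := by
    ext i; by_cases h : d i = 0 <;> simp [hinddef, h]
  have hRpsd : R.PosSemidef := by
    rw [hRdef, hindreal]
    exact conj_diag_psd V hV fun i => by by_cases h : d i = 0 <;> simp [h]
  have hRH : R.IsHermitian := hRpsd.isHermitian
  have hii : ind * ind = ind := by
    funext i; by_cases h : d i = 0 <;> simp [hinddef, h]
  have hdi : (fun i => (d i : ℂ)) * ind = fun i => (d i : ℂ) := by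
    funext i; by_cases h : d i = 0 <;> simp [hinddef, h]
  have hid : ind * (fun i => (d i : ℂ)) = fun i => (d i : ℂ) := by
    funext i; by_cases h : d i = 0 <;> simp [hinddef, h]
  have hRidem : R * R = R := by
    rw [hRdef, conj_diag_conj V hV, hii]
  have hXR : X * R = X := by
    rw [hspec, hRdef, conj_diag_conj V hV, hdi]
  have hRX : R * X = X := by
    rw [hspec, hRdef, conj_diag_conj V hV, hid]
  refine ⟨R, hRH, hRidem, hRpsd, hXR, hRX, ?_, ?_⟩
  · set m : ℝ := Finset.univ.inf' hne (fun i => if d i = 0 then 1 else d i) with hmdef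
    have hm : 0 < m := by
      rw [hmdef, Finset.lt_inf'_iff]
      intro i _
      by_cases h : d i = 0 <;> simp [h]
      exact lt_of_le_of_ne (hdnn i) (Ne.symm h)
    refine ⟨m, hm, ?_⟩
    have hsmul : (m:ℂ) • R = V * diagonal ((m:ℂ) • ind) * star V := by
      rw [hRdef, diagonal_smul, Matrix.mul_smul, Matrix.smul_mul]
    have hsub : X - (m:ℂ) • R =
        V * diagonal (fun i => (((fun i => if d i = 0 then (0:ℝ) else d i - m) i : ℝ) : ℂ)) * star V := by
      have hfun : ((fun i => (d i : ℂ)) - (m:ℂ) • ind)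
          = fun i => (((fun i => if d i = 0 then (0:ℝ) else d i - m) i : ℝ) : ℂ) := by
        funext i
        by_cases h : d i = 0
        · simp [hinddef, h]
        · simp only [Pi.sub_apply, Pi.smul_apply, hinddef, h, if_false, smul_eq_mul, mul_one]
          push_cast
          ring
      rw [hspec, hsmul, ← Matrix.sub_mul, ← Matrix.mul_sub, diagonal_sub]
      exact congrArg (fun f => V * diagonal f * star V) hfun
    rw [hsub]
    refine conj_diag_psd V hV fun i => ?_
    by_cases h : d i = 0
    · simp [h]
    · simp only [h, if_false]
      have : m ≤ d i := by
        rw [hmdef]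
        exact (Finset.inf'_le _ (Finset.mem_univ i)).trans_eq (by simp [h])
      linarith
  · intro B hBX
    have hBVD : B * V * diagonal (fun i => (d i : ℂ)) = 0 := by
      have h1 : B * V * diagonal (fun i => (d i : ℂ)) * star V * V
          = B * V * diagonal (fun i => (d i : ℂ)) := by
        rw [mul_assoc _ (star V) V, hV', mul_one]
      rw [← h1]
      have h2 : B * V * diagonal (fun i => (d i : ℂ)) * star V = B * X := by
        rw [hspec]; simp only [mul_assoc]
      rw [h2, hBX, Matrix.zero_mul]
    have hBVD' : B * V * diagonal ind = 0 := by
      ext i j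
      have h0 := Matrix.ext_iff.mpr hBVD i j
      rw [Matrix.mul_diagonal] at h0 ⊢
      by_cases h : d j = 0
      · simp [hinddef, h]
      · have : (B * V) i j = 0 := by
          have hd : ((d j : ℂ)) ≠ 0 := by exact_mod_cast h
          exact (mul_eq_zero.mp h0).resolve_right hd
        simp [this]
    rw [hRdef, ← mul_assoc, ← mul_assoc, hBVD', Matrix.zero_mul]

lemma dom_supp {X R W : Mn n} (hW : W.PosSemidef) (hRH : R.IsHermitian)
    (hXR : X * R = X) (hRX : R * X = X) {c : ℝ}
    (hc : ((c:ℂ) • X - W).PosSemidef) : R * W * R = W := by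
  set E : Mn n := 1 - R with hEdef
  have hEH : E.IsHermitian := by
    unfold Matrix.IsHermitian
    rw [hEdef, conjTranspose_sub, conjTranspose_one, hRH.eq]
  have hXE : X * E = 0 := by rw [hEdef, Matrix.mul_sub, mul_one, hXR, sub_self]
  have hEX : E * X = 0 := by rw [hEdef, Matrix.sub_mul, one_mul, hRX, sub_self]
  have hEZ : E * ((c:ℂ) • X - W) * E = -(E * W * E) := by
    have h1 : E * ((c:ℂ) • X - W) = -(E * W) := by
      rw [Matrix.mul_sub, Matrix.mul_smul, hEX, smul_zero, zero_sub]
    rw [h1, Matrix.neg_mul]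
  have hZ : E * W * E = 0 := by
    apply psd_negsemidef (psd_conj' hW hEH)
    rw [← hEZ]
    exact psd_conj' hc hEH
  obtain ⟨hWE, hEW⟩ := sandwich_zero hW hEH hZ
  have hWR : W * R = W := by
    have := hWE
    rw [hEdef, Matrix.mul_sub, mul_one, sub_eq_zero] at this
    exact this.symm
  have hRW : R * W = W := by
    have := hEW
    rw [hEdef, Matrix.sub_mul, one_mul, sub_eq_zero] at this
    exact this.symm
  rw [hRW, hWR]

lemma supp_invariant {T : Module.End ℂ (Mn n)} (hTpos : IsPosMap T)
    {X R : Mn n} (hX : X.PosSemidef) (hTX : T X = X)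
    (hRH : R.IsHermitian) (hRidem : R * R = R) (hRpsd : R.PosSemidef)
    (hXR : X * R = X) (hRX : R * X = X)
    {m : ℝ} (hm : 0 < m) (hdom : (X - (m:ℂ) • R).PosSemidef) :
    ∀ Y : Mn n, ∃ Z : Mn n, T (R * Y * R) = R * Z * R := by
  -- step 1: dominated PSD matrices have T-images supported in R
  have step1 : ∀ (W : Mn n) (c : ℝ), W.PosSemidef → ((c:ℂ) • X - W).PosSemidef →
      R * (T W) * R = T W := by
    intro W c hW hc
    have hTW := hTpos W hW
    have hTc : ((c:ℂ) • X - T W).PosSemidef := by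
      have := hTpos _ hc
      rwa [map_sub, LinearMap.map_smul, hTX] at this
    exact dom_supp hTW hRH hXR hRX hTc
  -- step 2: R ≤ (1/m) X scaled
  have hRdom : ∀ c : ℝ, 0 ≤ c → (((c/m : ℝ):ℂ) • X - (c:ℂ) • R).PosSemidef := by
    intro c hc
    have h1 := psd_smul hdom (c := c/m) (div_nonneg hc hm.le)
    have : ((c/m : ℝ):ℂ) • (X - (m:ℂ) • R) = ((c/m : ℝ):ℂ) • X - (c:ℂ) • R := by
      rw [smul_sub, smul_smul]
      congr 2
      push_cast
      field_simp
    rwa [this] at h1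
  -- step 3: Hermitian matrices supported in R
  have step3 : ∀ H : Mn n, H.IsHermitian → R * H * R = H → R * (T H) * R = T H := by
    intro H hH hRHR
    obtain ⟨c, hc, hcm, hcp⟩ := herm_bound hH
    set W1 : Mn n := H + (c:ℂ) • R with hW1def
    set W2 : Mn n := (c:ℂ) • R with hW2def
    have hW1R : W1 = R * ((c:ℂ) • 1 + H) * R := by
      rw [Matrix.mul_add, Matrix.add_mul, Matrix.mul_smul, Matrix.smul_mul, mul_one, hRidem,
        hRHR, hW1def, add_comm]
    have hW1psd : W1.PosSemidef := by rw [hW1R]; exact psd_conj' hcp hRH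
    have hW2psd : W2.PosSemidef := psd_smul hRpsd hc
    have h2cRW1 : ((2*c:ℝ):ℂ) • R - W1 = R * ((c:ℂ) • 1 - H) * R := by
      rw [Matrix.mul_sub, Matrix.sub_mul, Matrix.mul_smul, Matrix.smul_mul, mul_one, hRidem,
        hRHR, hW1def]
      push_cast
      module
    have hW1dom : ((((2*c)/m : ℝ):ℂ) • X - W1).PosSemidef := by
      have ha := hRdom (2*c) (by linarith)
      have hb : (((2*c:ℝ):ℂ) • R - W1).PosSemidef := by
        rw [h2cRW1]; exact psd_conj' hcm hRH
      have := ha.add hb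
      rwa [sub_add_sub_cancel] at this
    have hW2dom : (((c/m : ℝ):ℂ) • X - W2).PosSemidef := hRdom c hc
    have hTH : T H = T W1 - T W2 := by
      rw [hW1def, hW2def, map_add, add_sub_cancel_right]
    rw [hTH, Matrix.mul_sub, Matrix.sub_mul,
      step1 W1 ((2*c)/m) hW1psd hW1dom, step1 W2 (c/m) hW2psd hW2dom]
  -- step 4: general Y
  intro Y
  set Y' : Mn n := R * Y * R with hY'def
  have hY'R : R * Y' * R = Y' := by
    rw [hY'def]
    calc R * (R * Y * R) * R = (R * R) * Y * (R * R) := by simp only [mul_assoc]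
    _ = R * Y * R := by rw [hRidem]
  have hY'H : R * Y'ᴴ * R = Y'ᴴ := by
    have : Y'ᴴ = R * Yᴴ * R := by
      rw [hY'def, conjTranspose_mul, conjTranspose_mul, hRH.eq, mul_assoc]
    rw [this]
    calc R * (R * Yᴴ * R) * R = (R * R) * Yᴴ * (R * R) := by simp only [mul_assoc]
    _ = R * Yᴴ * R := by rw [hRidem]
  set A1 : Mn n := Y' + Y'ᴴ with hA1def
  set A2 : Mn n := Complex.I • (Y' - Y'ᴴ) with hA2def
  have hA1H : A1.IsHermitian := by
    unfold Matrix.IsHermitian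
    rw [hA1def, conjTranspose_add, conjTranspose_conjTranspose, add_comm]
  have hA2H : A2.IsHermitian := by
    unfold Matrix.IsHermitian
    rw [hA2def, conjTranspose_smul, conjTranspose_sub, conjTranspose_conjTranspose]
    simp only [Complex.star_def, Complex.conj_I, smul_sub, neg_smul, neg_sub_neg]
  have hA1R : R * A1 * R = A1 := by
    rw [hA1def, Matrix.mul_add, Matrix.add_mul, hY'R, hY'H]
  have hA2R : R * A2 * R = A2 := by
    rw [hA2def, Matrix.mul_smul, Matrix.smul_mul, Matrix.mul_sub, Matrix.sub_mul, hY'R, hY'H]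
  have hsplit : Y' = (1/2 : ℂ) • A1 + (-(Complex.I)/2) • A2 := by
    rw [hA1def, hA2def, smul_smul]
    have : (-(Complex.I)/2) * Complex.I = 1/2 := by
      have := Complex.I_mul_I
      field_simp
      simp [Complex.I_sq]
    rw [this]
    module
  refine ⟨(1/2 : ℂ) • T A1 + (-(Complex.I)/2) • T A2, ?_⟩
  have h1 := step3 A1 hA1H hA1R
  have h2 := step3 A2 hA2H hA2R
  rw [hsplit, map_add, LinearMap.map_smul, LinearMap.map_smul, Matrix.mul_add, Matrix.add_mul,
    Matrix.mul_smul, Matrix.smul_mul, Matrix.mul_smul, Matrix.smul_mul, h1, h2]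

attribute [local instance] Matrix.normedAddCommGroup Matrix.normedSpace

-- entry bound
lemma entry_bound {X : Mn n} (hX : X.PosSemidef) (h1 : X.trace.re ≤ 1) (i j : Fin n) :
    ‖X i j‖ ≤ 1 := by
  set B := hX.sqrt with hBdef
  have hh : Bᴴ = B := hX.posSemidef_sqrt.isHermitian
  have hXs : Bᴴ * B = X := by rw [hh]; exact hX.sqrt_mul_self
  have hentry : ∀ i j, X i j = ∑ k, (starRingEnd ℂ) (B k i) * B k j := by
    intro i j
    rw [← hXs, Matrix.mul_apply]
    exact Finset.sum_congr rfl fun k _ => by rw [conjTranspose_apply]; rfl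
  have hdiag : ∀ i, (X i i).re = ∑ k, Complex.normSq (B k i) := by
    intro i
    rw [hentry i i]
    rw [Complex.re_sum]
    congr 1; ext k
    rw [← Complex.normSq_eq_conj_mul_self]
    simp
  have hdiag_le : ∀ i, (X i i).re ≤ 1 := by
    intro i
    refine le_trans ?_ h1
    have : X.trace.re = ∑ k, (X k k).re := by
      rw [Matrix.trace]; exact Complex.re_sum _ _
    rw [this]
    refine Finset.single_le_sum (f := fun k => (X k k).re) (fun k _ => ?_) (Finset.mem_univ i)
    have := diag_nonneg hX k
    rw [Complex.le_def] at this
    simpa using this.1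
  calc ‖X i j‖ ≤ ∑ k, ‖(starRingEnd ℂ) (B k i) * B k j‖ := by
        rw [hentry]; exact norm_sum_le _ _
  _ ≤ ∑ k, (Complex.normSq (B k i) + Complex.normSq (B k j)) / 2 := by
        refine Finset.sum_le_sum fun k _ => ?_
        rw [norm_mul, Complex.norm_conj, ← Complex.sq_norm, ← Complex.sq_norm]
        nlinarith [norm_nonneg (B k i), norm_nonneg (B k j),
          sq_nonneg (‖B k i‖ - ‖B k j‖)]
  _ = ((X i i).re + (X j j).re) / 2 := by
        rw [hdiag i, hdiag j, ← Finset.sum_add_distrib, Finset.sum_div]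
  _ ≤ 1 := by
        have := hdiag_le i; have := hdiag_le j; linarith

lemma norm_le_one {X : Mn n} (hX : X.PosSemidef) (h1 : X.trace.re ≤ 1) : ‖X‖ ≤ 1 := by
  rw [Matrix.norm_le_iff (by norm_num : (0:ℝ) ≤ 1)]
  intro i j
  exact entry_bound hX h1 i j

lemma exists_fixed_point (S : Module.End ℂ (Mn n)) (hSpos : IsPosMap S)
    (σ : ℕ → Mn n) (hσ : ∀ N, σ (N+1) = S (σ N)) (hpsd : ∀ N, (σ N).PosSemidef)
    (htr : ∀ N, (σ N).trace.re ≤ 1) {L : ℝ}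
    (hL : Tendsto (fun N => (σ N).trace.re) atTop (𝓝 L)) :
    ∃ X : Mn n, X.PosSemidef ∧ S X = X ∧ X.trace = ((L : ℝ) : ℂ) := by
  haveI : ProperSpace (Mn n) := FiniteDimensional.proper ℂ (Mn n)
  set A : ℕ → Mn n := fun M => (((M:ℝ)⁻¹ : ℝ) : ℂ) • ∑ N ∈ Finset.range M, σ N with hAdef
  have hσnorm : ∀ N, ‖σ N‖ ≤ 1 := fun N => norm_le_one (hpsd N) (htr N)
  have hAbound : ∀ M, ‖A M‖ ≤ 1 := by
    intro M
    rcases Nat.eq_zero_or_pos M with h | h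
    · subst h; simp [hAdef]
    · rw [hAdef]
      simp only
      rw [norm_smul]
      have h1 : ‖∑ N ∈ Finset.range M, σ N‖ ≤ (M:ℝ) := by
        refine (norm_sum_le _ _).trans ?_
        calc ∑ N ∈ Finset.range M, ‖σ N‖ ≤ ∑ N ∈ Finset.range M, 1 :=
              Finset.sum_le_sum fun N _ => hσnorm N
        _ = (M:ℝ) := by simp
      have h2 : ‖(((M:ℝ)⁻¹ : ℝ) : ℂ)‖ = (M:ℝ)⁻¹ := by
        rw [Complex.norm_real, Real.norm_eq_abs, abs_of_nonneg (by positivity)]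
      rw [h2]
      calc (M:ℝ)⁻¹ * ‖∑ N ∈ Finset.range M, σ N‖ ≤ (M:ℝ)⁻¹ * (M:ℝ) := by
            exact mul_le_mul_of_nonneg_left h1 (by positivity)
      _ = 1 := by field_simp
  obtain ⟨X, -, φ, hφ, hconv0⟩ := tendsto_subseq_of_bounded
    (Metric.isBounded_closedBall (x := (0 : Mn n)) (r := 1))
    (fun M => mem_closedBall_zero_iff.mpr (hAbound M))
  have hconv : Tendsto (fun k => A (φ k)) atTop (𝓝 X) := hconv0
  -- A M is PSD
  have hApsd : ∀ M, (A M).PosSemidef := by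
    intro M
    have hsum : (∑ N ∈ Finset.range M, σ N).PosSemidef := by
      induction M with
      | zero => simp [Matrix.PosSemidef.zero]
      | succ M ih => rw [Finset.sum_range_succ]; exact ih.add (hpsd M)
    have : (0:ℝ) ≤ (M:ℝ)⁻¹ := by positivity
    refine posSemidef_iff_dotProduct_mulVec.mpr ⟨?_, ?_⟩
    · unfold Matrix.IsHermitian
      rw [conjTranspose_smul, hsum.isHermitian.eq]
      congr 1
      simp
    · intro x
      have h0 := hsum.dotProduct_mulVec_nonneg x
      rw [Matrix.smul_mulVec, dotProduct_smul]
      exact mul_nonneg (by exact_mod_cast Complex.zero_le_real.mpr this) h0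
  -- X is PSD
  have hXpsd : X.PosSemidef := by
    refine posSemidef_iff_dotProduct_mulVec.mpr ⟨?_, ?_⟩
    · have hcs : Continuous (fun M : Mn n => Mᴴ - M) := by
        have h1 : Continuous (fun M : Mn n => Mᴴ) := continuous_star
        exact h1.sub continuous_id
      have h2 : Tendsto (fun k => (A (φ k))ᴴ - A (φ k)) atTop (𝓝 (Xᴴ - X)) :=
        (hcs.tendsto X).comp hconv
      have h3 : (fun k => (A (φ k))ᴴ - A (φ k)) = fun _ => 0 := by
        funext k; rw [(hApsd (φ k)).isHermitian.eq, sub_self]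
      rw [h3] at h2
      exact sub_eq_zero.mp (tendsto_nhds_unique h2 tendsto_const_nhds)
    · intro v
      set g : Mn n →ₗ[ℂ] ℂ :=
        { toFun := fun M => star v ⬝ᵥ M.mulVec v
          map_add' := by
            intro a b
            show star v ⬝ᵥ (a + b) *ᵥ v = star v ⬝ᵥ a *ᵥ v + star v ⬝ᵥ b *ᵥ v
            rw [Matrix.add_mulVec, dotProduct_add]
          map_smul' := by
            intro c a
            show star v ⬝ᵥ (c • a) *ᵥ v = c • (star v ⬝ᵥ a *ᵥ v)
            rw [Matrix.smul_mulVec, dotProduct_smul] } with hgdef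
      have hgc : Continuous g := g.continuous_of_finiteDimensional
      have h2 : Tendsto (fun k => g (A (φ k))) atTop (𝓝 (g X)) := (hgc.tendsto X).comp hconv
      have hge : ∀ k, 0 ≤ g (A (φ k)) := fun k => (hApsd (φ k)).dotProduct_mulVec_nonneg v
      constructor
      case left =>
        -- re part
        have h3 : Tendsto (fun k => (g (A (φ k))).re) atTop (𝓝 (g X).re) :=
          (Complex.continuous_re.tendsto _).comp h2
        have h4 : ∀ k, 0 ≤ (g (A (φ k))).re := fun k => by
          have := hge k; rw [Complex.le_def] at this; simpa using this.1
        exact le_of_tendsto_of_tendsto' tendsto_const_nhds h3 h4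
      case right =>
        have h3 : Tendsto (fun k => (g (A (φ k))).im) atTop (𝓝 (g X).im) :=
          (Complex.continuous_im.tendsto _).comp h2
        have h4 : (fun k => (g (A (φ k))).im) = fun _ => 0 := by
          funext k
          have := hge k; rw [Complex.le_def] at this
          simpa using this.2.symm
        rw [h4] at h3
        exact (tendsto_nhds_unique h3 tendsto_const_nhds).symm
  -- trace X = L
  have htrX : X.trace = ((L:ℝ):ℂ) := by
    have htrcont : Continuous (fun M : Mn n => M.trace) :=
      (Matrix.traceLinearMap (Fin n) ℂ ℂ).continuous_of_finiteDimensional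
    have h2 : Tendsto (fun k => (A (φ k)).trace) atTop (𝓝 X.trace) :=
      (htrcont.tendsto X).comp hconv
    have hb : ∀ M : ℕ, (A M).trace = ((((M:ℝ)⁻¹ • ∑ N ∈ Finset.range M, (σ N).trace.re : ℝ)) : ℂ) := by
      intro M
      rw [hAdef]
      simp only
      rw [Matrix.trace_smul, Matrix.trace_sum]
      have h4 : ∑ N ∈ Finset.range M, (σ N).trace = ((∑ N ∈ Finset.range M, (σ N).trace.re : ℝ) : ℂ) := by
        push_cast
        exact Finset.sum_congr rfl fun N _ => trace_real (hpsd N)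
      rw [h4, smul_eq_mul, smul_eq_mul, Complex.ofReal_mul]
    have hces : Tendsto (fun M : ℕ => ((M:ℝ)⁻¹ • ∑ N ∈ Finset.range M, (σ N).trace.re : ℝ)) atTop (𝓝 L) :=
      hL.cesaro
    have h3 : Tendsto (fun k => (A (φ k)).trace) atTop (𝓝 ((L:ℝ):ℂ)) := by
      have h5 : Tendsto (fun M : ℕ => ((A M).trace)) atTop (𝓝 ((L:ℝ):ℂ)) := by
        have h6 := (Complex.continuous_ofReal.tendsto L).comp hces
        have h7 : (fun M : ℕ => (A M).trace)
            = fun M : ℕ => ((((M:ℝ)⁻¹ • ∑ N ∈ Finset.range M, (σ N).trace.re : ℝ)) : ℂ) :=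
          funext hb
        rw [h7]; exact h6
      exact h5.comp (hφ.tendsto_atTop)
    exact tendsto_nhds_unique h2 h3
  -- S X = X
  have hSX : S X = X := by
    have hScont : Continuous (S : Mn n →ₗ[ℂ] Mn n) := S.continuous_of_finiteDimensional
    have h2 : Tendsto (fun k => S (A (φ k)) - A (φ k)) atTop (𝓝 (S X - X)) :=
      ((hScont.tendsto X).comp hconv).sub hconv
    have hdiff : ∀ M, S (A M) - A M = (((M:ℝ)⁻¹ : ℝ) : ℂ) • (σ M - σ 0) := by
      intro M
      rw [hAdef]
      simp only
      rw [LinearMap.map_smul, map_sum, ← smul_sub]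
      congr 1
      have h4 : ∀ N ∈ Finset.range M, S (σ N) = σ (N+1) := fun N _ => (hσ N).symm
      rw [Finset.sum_congr rfl h4]
      have := Finset.sum_range_sub σ M
      have heq : ∑ N ∈ Finset.range M, σ (N+1) = ∑ N ∈ Finset.range M, (σ (N+1) - σ N) + ∑ N ∈ Finset.range M, σ N := by
        rw [← Finset.sum_add_distrib]
        congr 1; funext N; abel
      rw [heq, this]
      abel
    have h5 : Tendsto (fun k => S (A (φ k)) - A (φ k)) atTop (𝓝 0) := by
      apply squeeze_zero_norm (a := fun k => ((φ k : ℝ))⁻¹ * 2)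
      · intro k
        rw [hdiff]
        rw [norm_smul]
        have h2' : ‖(((φ k:ℝ)⁻¹ : ℝ) : ℂ)‖ = ((φ k:ℝ))⁻¹ := by
          rw [Complex.norm_real, Real.norm_eq_abs, abs_of_nonneg (by positivity)]
        rw [h2']
        refine mul_le_mul_of_nonneg_left ?_ (by positivity)
        calc ‖σ (φ k) - σ 0‖ ≤ ‖σ (φ k)‖ + ‖σ 0‖ := norm_sub_le _ _
        _ ≤ 2 := by have := hσnorm (φ k); have := hσnorm 0; linarith
      · have h6 : Tendsto (fun M : ℕ => ((M:ℝ))⁻¹ * 2) atTop (𝓝 0) := by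
          have := (tendsto_inv_atTop_nhds_zero_nat (𝕜 := ℝ)).mul_const 2
          simpa using this
        exact h6.comp hφ.tendsto_atTop
    exact sub_eq_zero.mp (tendsto_nhds_unique h2 h5)
  exact ⟨X, hXpsd, hSX, htrX⟩

end Helpers

open Filter Topology

/-- For an irreducible positive trace-preserving map `T` on `M_n` and a
nonzero subspace `V` (orthogonal projection `P ≠ 0`, `Q = I − P`), the hitting
probability of `V` from any unit vector `φ` equals 1:
`Σ_{r≥1} Tr(ℙT(ℚT)^{r−1}ρ_φ) = 1`. -/
theorem stmt17 {n : ℕ} (T : Module.End ℂ (Mn n))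
    (hTpos : IsPosMap T) (hTtr : IsTracePreserving T) (hirr : IsIrreducibleMap T)
    (P : Mn n) (hPH : P.IsHermitian) (hPidem : P * P = P) (hP0 : P ≠ 0)
    (Q : Mn n) (hQ : Q = 1 - P) :
    ∀ φ : Fin n → ℂ, star φ ⬝ᵥ φ = 1 →
      (∑' r : ℕ, ((sandwich P * T * (sandwich Q * T) ^ r) (rhoOf φ)).trace) = 1 := by
  intro φv hφv
  -- Q facts
  have hQH : Q.IsHermitian := by
    unfold Matrix.IsHermitian
    rw [hQ, conjTranspose_sub, conjTranspose_one, hPH.eq]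
  have hQidem : Q * Q = Q := by
    have h : (1 - P) * (1 - P) = 1 - P - P + P * P := by noncomm_ring
    rw [hQ, h, hPidem]
    abel
  have hPQ : P + Q = 1 := by rw [hQ]; abel
  have hPQ0 : P * Q = 0 := by
    rw [hQ, Matrix.mul_sub, mul_one, hPidem, sub_self]
  -- sandwich formula
  have hsand : ∀ (E : Mn n) (X : Mn n), sandwich E X = E * X * E := by
    intro E X
    show (LinearMap.mulLeft ℂ E) ((LinearMap.mulRight ℂ E) X) = E * X * E
    rw [LinearMap.mulRight_apply, LinearMap.mulLeft_apply, mul_assoc]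
  -- ρ facts
  set ρ : Mn n := rhoOf φv with hρdef
  have hρpsd : ρ.PosSemidef := by
    refine posSemidef_iff_dotProduct_mulVec.mpr ⟨?_, ?_⟩
    · unfold Matrix.IsHermitian
      ext i j
      simp [hρdef, rhoOf, vecMulVec_apply, conjTranspose_apply, mul_comm]
    · intro x
      have hmv : ρ *ᵥ x = (star φv ⬝ᵥ x) • φv := by
        ext i
        simp [hρdef, rhoOf, Matrix.mulVec, vecMulVec_apply, dotProduct, Finset.mul_sum,
          mul_comm, mul_assoc, mul_left_comm]
      rw [hmv, dotProduct_smul]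
      have hsx : star x ⬝ᵥ φv = star (star φv ⬝ᵥ x) := by
        simp [dotProduct, mul_comm]
      rw [smul_eq_mul, mul_comm, hsx]
      exact star_mul_self_nonneg _
  have hρtr : ρ.trace = 1 := by
    rw [hρdef, rhoOf, Matrix.trace]
    rw [← hφv]
    simp [Matrix.diag, vecMulVec_apply, dotProduct, mul_comm]
  -- the iterates
  set S : Module.End ℂ (Mn n) := sandwich Q * T with hSdef
  have hSpos : IsPosMap S := by
    intro X hX
    have : S X = Q * (T X) * Q := by
      rw [hSdef, Module.End.mul_apply, hsand]
    rw [this]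
    exact psd_conj' (hTpos X hX) hQH
  set σ : ℕ → Mn n := fun N => (S ^ N) ρ with hσdef
  have hσ0 : σ 0 = ρ := by rw [hσdef]; simp
  have hσrec : ∀ N, σ (N+1) = S (σ N) := by
    intro N
    rw [hσdef]
    simp only
    rw [pow_succ']
    rfl
  have hσpsd : ∀ N, (σ N).PosSemidef := by
    intro N
    induction N with
    | zero => rw [hσ0]; exact hρpsd
    | succ N ih => rw [hσrec]; exact hSpos _ ih
  set a : ℕ → ℝ := fun N => (σ N).trace.re with hadef
  have hatr : ∀ N, (σ N).trace = ((a N : ℝ) : ℂ) := fun N => trace_real (hσpsd N)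
  have ha0 : a 0 = 1 := by
    have h : a 0 = (σ 0).trace.re := rfl
    rw [h, hσ0, hρtr]
    simp
  -- term identity
  have hterm : ∀ r : ℕ, ((sandwich P * T * S ^ r) ρ).trace = ((a r - a (r+1) : ℝ) : ℂ) := by
    intro r
    have h1 : (sandwich P * T * S ^ r) ρ = P * (T (σ r)) * P := by
      rw [Module.End.mul_apply, Module.End.mul_apply, hsand]
    have h2 : (σ (r+1)).trace = (Q * (T (σ r)) * Q).trace := by
      rw [hσrec r, hSdef, Module.End.mul_apply, hsand]
    have h3 := trace_split (X := T (σ r)) hPidem hQidem hPQ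
    rw [h1]
    have h4 : (T (σ r)).trace = (σ r).trace := hTtr (σ r)
    have : (P * T (σ r) * P).trace = (σ r).trace - (σ (r+1)).trace := by
      rw [h2]; linear_combination h3 + h4
    rw [this, hatr, hatr]
    push_cast
    ring_nf
  -- nonneg terms, antitone a
  have hterm_nonneg : ∀ r : ℕ, 0 ≤ a r - a (r+1) := by
    intro r
    have hpsd : (P * (T (σ r)) * P).PosSemidef := psd_conj' (hTpos _ (hσpsd r)) hPH
    have h0 := trace_nonneg' hpsd
    have h1 : (P * (T (σ r)) * P).trace = ((a r - a (r+1) : ℝ) : ℂ) := by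
      rw [← hterm r]
      rw [Module.End.mul_apply, Module.End.mul_apply, hsand]
    rw [h1] at h0
    rw [Complex.le_def] at h0
    simpa using h0.1
  have hanti : Antitone a := antitone_nat_of_succ_le fun N => by linarith [hterm_nonneg N]
  have hann : ∀ N, 0 ≤ a N := by
    intro N
    have := trace_nonneg' (hσpsd N)
    rw [hatr N] at this
    rw [Complex.le_def] at this
    simpa using this.1
  have hale : ∀ N, a N ≤ 1 := fun N => ha0 ▸ hanti (Nat.zero_le N)
  -- limit
  set L : ℝ := ⨅ N, a N with hLdef
  have hL : Tendsto a atTop (𝓝 L) :=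
    tendsto_atTop_ciInf hanti ⟨0, fun x ⟨N, hN⟩ => hN ▸ hann N⟩
  have hL0 : 0 ≤ L := le_ciInf hann
  -- L = 0
  have hLzero : L = 0 := by
    by_contra hLne
    have hLpos : 0 < L := lt_of_le_of_ne hL0 (Ne.symm hLne)
    obtain ⟨X, hXpsd, hSX, hXtr⟩ := exists_fixed_point S hSpos σ hσrec hσpsd hale hL
    have hX0 : X ≠ 0 := by
      intro h
      rw [h] at hXtr
      simp only [Matrix.trace_zero] at hXtr
      have : (L:ℂ) = 0 := hXtr.symm
      exact hLne (by exact_mod_cast this)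
    have hSXQ : Q * (T X) * Q = X := by
      rw [← hsand, ← Module.End.mul_apply, ← hSdef, hSX]
    -- trace of P-corner is zero
    have htrP : (P * (T X) * P).trace = 0 := by
      have h3 := trace_split (X := T X) hPidem hQidem hPQ
      have h4 : (T X).trace = X.trace := hTtr X
      have h5 : (Q * T X * Q).trace = X.trace := by rw [hSXQ]
      linear_combination h3 + h4 - h5
    have hPcorner : P * (T X) * P = 0 :=
      psd_trace_zero (psd_conj' (hTpos X hXpsd) hPH) htrP
    obtain ⟨hTXP, hPTX⟩ := sandwich_zero (hTpos X hXpsd) hPH hPcorner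
    have hTXX : T X = X := by
      have h1 : (P + Q) * T X * (P + Q) = T X := by rw [hPQ, one_mul, mul_one]
      have h2 : (P + Q) * T X * (P + Q) = Q * T X * Q := by
        have e1 : (P + Q) * T X = Q * T X := by rw [Matrix.add_mul, hPTX, zero_add]
        rw [e1, Matrix.mul_add, mul_assoc Q (T X) P, hTXP, mul_zero, zero_add]
      rw [← h1, h2, hSXQ]
    obtain ⟨R, hRH, hRidem, hRpsd, hXR, hRX, ⟨m, hm, hdom⟩, hker⟩ := support_proj hXpsd hX0
    have hPX : P * X = 0 := by
      rw [← hSXQ, ← mul_assoc, ← mul_assoc, hPQ0, Matrix.zero_mul, Matrix.zero_mul]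
    have hPR : P * R = 0 := hker P hPX
    have hR0 : R ≠ 0 := by
      intro h
      rw [h, mul_zero] at hXR
      exact hX0 hXR.symm
    have hR1 : R ≠ 1 := by
      intro h
      rw [h, mul_one] at hPR
      exact hP0 hPR
    have hinv := supp_invariant hTpos hXpsd hTXX hRH hRidem hRpsd hXR hRX hm hdom
    rcases hirr R hRH hRidem hinv with h | h
    · exact hR0 h
    · exact hR1 h
  -- summation
  set u : ℕ → ℝ := fun r => a r - a (r+1) with hudef
  have hsumN : ∀ N, ∑ r ∈ Finset.range N, u r = 1 - a N := by
    intro N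
    rw [hudef]
    simp only
    rw [Finset.sum_range_sub' a N, ha0]
  have hsummable : Summable u := by
    apply summable_of_sum_range_le (c := 1) hterm_nonneg
    intro N
    rw [hsumN N]
    linarith [hann N]
  have htsum : ∑' r, u r = 1 := by
    have h1 : Tendsto (fun N => ∑ r ∈ Finset.range N, u r) atTop (𝓝 (∑' r, u r)) :=
      hsummable.hasSum.tendsto_sum_nat
    have h2 : Tendsto (fun N => ∑ r ∈ Finset.range N, u r) atTop (𝓝 (1 - L)) := by
      have : Tendsto (fun N => 1 - a N) atTop (𝓝 (1 - L)) := tendsto_const_nhds.sub hL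
      convert this using 1
      funext N
      exact hsumN N
    have := tendsto_nhds_unique h1 h2
    rw [this, hLzero, sub_zero]
  calc (∑' r : ℕ, ((sandwich P * T * S ^ r) ρ).trace)
      = ∑' r : ℕ, ((u r : ℝ) : ℂ) := by
        congr 1
        funext r
        exact hterm r
  _ = ((∑' r, u r : ℝ) : ℂ) := (Complex.ofReal_tsum u).symm
  _ = 1 := by rw [htsum]; simp
end
end

section
/- Let T be an irreducible positive trace-preserving linear map on M_n and V ⊆ ℂⁿ a nonzero subspace. Then 1 is not an eigenvalue of the map ℚT : M_n → M_n; that is, every irreducible channel satisfies Assumption I with respect to every nonzero goal subspace. -/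
open Matrix
open scoped ComplexOrder

noncomputable section

namespace Stmt19

variable {n : ℕ}

lemma sandwich_apply (Q X : Mn n) : sandwich Q X = Q * X * Q := by
  simp [sandwich, LinearMap.mulLeft_apply, LinearMap.mulRight_apply, mul_assoc]

lemma trace_psd_nonneg {A : Mn n} (h : A.PosSemidef) : 0 ≤ A.trace := by
  have h1 : ∀ i, 0 ≤ A i i := fun i => by
    simpa [dotProduct, Pi.single_apply, apply_ite] using h.dotProduct_mulVec_nonneg (Pi.single i 1)
  exact Finset.sum_nonneg fun i _ => h1 i

lemma psd_trace_zero {A : Mn n} (h : A.PosSemidef) (ht : A.trace = 0) : A = 0 := by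
  have h1 : ∀ i ∈ Finset.univ, 0 ≤ A i i := fun i _ => by
    simpa [dotProduct, Pi.single_apply, apply_ite] using h.dotProduct_mulVec_nonneg (Pi.single i 1)
  have h2 : ∀ i, A i i = 0 := by
    intro i
    exact (Finset.sum_eq_zero_iff_of_nonneg h1).mp ht i (Finset.mem_univ i)
  have h3 : ∀ i, A *ᵥ Pi.single i 1 = 0 := by
    intro i
    refine (h.dotProduct_mulVec_zero_iff _).mp ?_
    have : star (Pi.single i 1) ⬝ᵥ A *ᵥ Pi.single i 1 = A i i := by
      simp [dotProduct, Pi.single_apply, apply_ite, Matrix.mulVec_single]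
    rw [this, h2 i]
  ext i j
  have := congrFun (h3 j) i
  simpa [Matrix.mulVec_single] using this

lemma psd_smul {A : Mn n} (h : A.PosSemidef) {r : ℝ} (hr : 0 ≤ r) :
    ((r : ℂ) • A).PosSemidef := by
  refine Matrix.PosSemidef.of_dotProduct_mulVec_nonneg ?_ ?_
  · have := h.1
    unfold Matrix.IsHermitian at *
    rw [Matrix.conjTranspose_smul, this]
    congr 1
    simp
  · intro x
    have := h.dotProduct_mulVec_nonneg x
    rw [Matrix.smul_mulVec, dotProduct_smul]
    exact mul_nonneg (by exact_mod_cast hr) this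

lemma psd_kernel_mono {Z Y : Mn n} (hZ : Z.PosSemidef) (hYZ : (Y - Z).PosSemidef)
    {v : Fin n → ℂ} (hv : Y *ᵥ v = 0) : Z *ᵥ v = 0 := by
  refine (hZ.dotProduct_mulVec_zero_iff v).mp ?_
  have h1 := hYZ.dotProduct_mulVec_nonneg v
  have e : star v ⬝ᵥ (Y - Z) *ᵥ v = star v ⬝ᵥ Y *ᵥ v - star v ⬝ᵥ Z *ᵥ v := by
    rw [Matrix.sub_mulVec, dotProduct_sub]
  rw [e, hv, dotProduct_zero, zero_sub] at h1
  have h2 := hZ.dotProduct_mulVec_nonneg v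
  have := neg_nonneg.mp h1
  exact le_antisymm this h2

lemma psd_corner_zero {W Pm : Mn n} (hW : W.PosSemidef) (hP : Pm.IsHermitian)
    (h : Pm * W * Pm = 0) : W * Pm = 0 ∧ Pm * W = 0 := by
  obtain ⟨V, rfl⟩ : ∃ V : Mn n, W = Vᴴ * V := by
    set U : Mn n := (hW.1.eigenvectorUnitary : Mn n) with hU
    have hs : W = U * Matrix.diagonal (fun i => ((hW.1.eigenvalues i : ℝ) : ℂ)) * Uᴴ :=
      hW.1.spectral_theorem
    set d : Fin n → ℂ := fun i => ((Real.sqrt (hW.1.eigenvalues i) : ℝ) : ℂ) with hd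
    refine ⟨Matrix.diagonal d * Uᴴ, ?_⟩
    have hD : (Matrix.diagonal d)ᴴ = Matrix.diagonal d := by
      rw [Matrix.diagonal_conjTranspose]; congr 1; funext i; simp [hd, Complex.conj_ofReal]
    have hDD : Matrix.diagonal d * Matrix.diagonal d
        = Matrix.diagonal (fun i => ((hW.1.eigenvalues i : ℝ) : ℂ)) := by
      rw [Matrix.diagonal_mul_diagonal]; congr 1; funext i
      rw [hd, ← Complex.ofReal_mul, Real.mul_self_sqrt (hW.eigenvalues_nonneg i)]
    rw [hs, Matrix.conjTranspose_mul, Matrix.conjTranspose_conjTranspose, hD, ← hDD]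
    simp only [mul_assoc]
  have h1 : (V * Pm)ᴴ * (V * Pm) = 0 := by
    calc (V * Pm)ᴴ * (V * Pm) = Pmᴴ * Vᴴ * (V * Pm) := by rw [Matrix.conjTranspose_mul]
    _ = Pm * (Vᴴ * V) * Pm := by rw [hP.eq]; noncomm_ring
    _ = 0 := h
  have h2 : V * Pm = 0 := Matrix.conjTranspose_mul_self_eq_zero.mp h1
  have hl : Vᴴ * V * Pm = 0 := by rw [mul_assoc, h2, mul_zero]
  refine ⟨hl, ?_⟩
  have : Pm * (Vᴴ * V) = (V * Pm)ᴴ * V := by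
    rw [Matrix.conjTranspose_mul, hP.eq, mul_assoc]
  rw [this, h2, Matrix.conjTranspose_zero, zero_mul]

lemma trace_proj_mul_nonneg {E W : Mn n} (hE : E.IsHermitian) (hE2 : E * E = E)
    (hW : W.PosSemidef) : 0 ≤ (E * W).trace := by
  have h1 : (E * W * Eᴴ).trace = (E * W).trace := by
    rw [Matrix.trace_mul_comm (E * W) Eᴴ, hE.eq, ← mul_assoc, hE2]
  rw [← h1]
  exact trace_psd_nonneg (hW.mul_mul_conjTranspose_same E)





/-- conjugated real diagonal -/
def cd (U : Mn n) (d : Fin n → ℝ) : Mn n :=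
  U * Matrix.diagonal (fun i => (d i : ℂ)) * Uᴴ

lemma cd_herm (U : Mn n) (d : Fin n → ℝ) : (cd U d).IsHermitian := by
  unfold Matrix.IsHermitian cd
  rw [Matrix.conjTranspose_mul, Matrix.conjTranspose_mul, Matrix.conjTranspose_conjTranspose,
    Matrix.diagonal_conjTranspose]
  have : (star fun i => ((d i : ℝ) : ℂ)) = fun i => ((d i : ℝ) : ℂ) := by
    funext i
    simp [Pi.star_apply, Complex.conj_ofReal]
  rw [this, mul_assoc]

lemma cd_mul {U : Mn n} (hU1 : Uᴴ * U = 1) (a b : Fin n → ℝ) :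
    cd U a * cd U b = cd U (fun i => a i * b i) := by
  unfold cd
  have : Matrix.diagonal (fun i => ((a i : ℝ) : ℂ)) * Matrix.diagonal (fun i => ((b i : ℝ) : ℂ))
      = Matrix.diagonal (fun i => ((a i * b i : ℝ) : ℂ)) := by
    rw [Matrix.diagonal_mul_diagonal]
    congr 1; funext i; push_cast; ring
  calc U * diagonal (fun i => ((a i : ℝ) : ℂ)) * Uᴴ * (U * diagonal (fun i => ((b i : ℝ) : ℂ)) * Uᴴ)
      = U * diagonal (fun i => ((a i : ℝ) : ℂ)) * (Uᴴ * U) * (diagonal (fun i => ((b i : ℝ) : ℂ)) * Uᴴ) := by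
        noncomm_ring
    _ = U * (diagonal (fun i => ((a i : ℝ) : ℂ)) * diagonal (fun i => ((b i : ℝ) : ℂ))) * Uᴴ := by
        rw [hU1]; noncomm_ring
    _ = U * diagonal (fun i => ((a i * b i : ℝ) : ℂ)) * Uᴴ := by rw [this]

lemma cd_add (U : Mn n) (a b : Fin n → ℝ) : cd U (a + b) = cd U a + cd U b := by
  unfold cd
  have : Matrix.diagonal (fun i => (((a + b) i : ℝ) : ℂ))
      = Matrix.diagonal (fun i => ((a i : ℝ) : ℂ)) + Matrix.diagonal (fun i => ((b i : ℝ) : ℂ)) := by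
    rw [Matrix.diagonal_add]; congr 1; funext i; push_cast; simp
  rw [this]; noncomm_ring

lemma cd_sub (U : Mn n) (a b : Fin n → ℝ) : cd U (a - b) = cd U a - cd U b := by
  unfold cd
  have : Matrix.diagonal (fun i => (((a - b) i : ℝ) : ℂ))
      = Matrix.diagonal (fun i => ((a i : ℝ) : ℂ)) - Matrix.diagonal (fun i => ((b i : ℝ) : ℂ)) := by
    rw [Matrix.diagonal_sub]; congr 1; funext i; push_cast; simp
  rw [this]; noncomm_ring

lemma cd_zero (U : Mn n) : cd U 0 = 0 := by
  unfold cd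
  have : Matrix.diagonal (fun i => (((0 : Fin n → ℝ) i : ℝ) : ℂ)) = 0 := by
    simp
  rw [this, mul_zero, zero_mul]

lemma cd_neg (U : Mn n) (a : Fin n → ℝ) : cd U (-a) = - cd U a := by
  have := cd_sub U 0 a
  simpa [cd_zero] using this

lemma cd_smul (U : Mn n) (r : ℝ) (a : Fin n → ℝ) :
    cd U (fun i => r * a i) = (r : ℂ) • cd U a := by
  unfold cd
  have : Matrix.diagonal (fun i => ((r * a i : ℝ) : ℂ))
      = (r : ℂ) • Matrix.diagonal (fun i => ((a i : ℝ) : ℂ)) := by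
    rw [show (fun i => ((r * a i : ℝ) : ℂ)) = (r : ℂ) • (fun i => ((a i : ℝ) : ℂ)) from
      funext fun i => by push_cast; simp, Matrix.diagonal_smul]
  rw [this, Matrix.mul_smul, Matrix.smul_mul]

lemma cd_psd (U : Mn n) {d : Fin n → ℝ} (hd : ∀ i, 0 ≤ d i) : (cd U d).PosSemidef := by
  have hdiag : (Matrix.diagonal (fun i => ((d i : ℝ) : ℂ))).PosSemidef := by
    refine Matrix.PosSemidef.diagonal ?_
    intro i
    show (0 : ℂ) ≤ ((d i : ℝ) : ℂ)
    exact_mod_cast hd i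
  simpa [cd] using hdiag.mul_mul_conjTranspose_same U

lemma cd_one {U : Mn n} (hU2 : U * Uᴴ = 1) : cd U (fun _ => 1) = 1 := by
  unfold cd
  have : Matrix.diagonal (fun i : Fin n => ((1 : ℝ) : ℂ)) = 1 := by simp
  rw [this, mul_one, hU2]

lemma cd_trace {U : Mn n} (hU1 : Uᴴ * U = 1) (d : Fin n → ℝ) :
    (cd U d).trace = ((∑ i, d i : ℝ) : ℂ) := by
  unfold cd
  rw [Matrix.trace_mul_cycle, hU1, one_mul, Matrix.trace_diagonal]
  push_cast; ring

lemma cd_mulVec_col {U : Mn n} (hU1 : Uᴴ * U = 1) (d : Fin n → ℝ) (i : Fin n) :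
    cd U d *ᵥ (U *ᵥ Pi.single i 1) = (d i : ℂ) • (U *ᵥ Pi.single i 1) := by
  unfold cd
  rw [Matrix.mulVec_mulVec]
  have h3 : U * Matrix.diagonal (fun i => ((d i : ℝ) : ℂ)) * Uᴴ * U
      = U * Matrix.diagonal (fun i => ((d i : ℝ) : ℂ)) := by
    rw [mul_assoc (U * _), hU1, mul_one]
  have h4 : (Pi.single i ((d i : ℂ)) : Fin n → ℂ) = (d i : ℂ) • (Pi.single i (1:ℂ) : Fin n → ℂ) := by
    funext j
    rcases eq_or_ne j i with rfl | hji
    · simp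
    · simp [Pi.single_apply, hji]
  rw [h3, ← Matrix.mulVec_mulVec, Matrix.diagonal_mulVec_single, mul_one, h4,
    Matrix.mulVec_smul]

lemma cd_mulVec_zero {U : Mn n} (hU1 : Uᴴ * U = 1) {d e : Fin n → ℝ}
    (hde : ∀ i, d i = 0 → e i = 0) {v : Fin n → ℂ} (hv : cd U d *ᵥ v = 0) :
    cd U e *ᵥ v = 0 := by
  set w := Uᴴ *ᵥ v with hw
  have key : ∀ (f : Fin n → ℝ), cd U f *ᵥ v = U *ᵥ (Matrix.diagonal (fun i => ((f i:ℝ):ℂ)) *ᵥ w) := by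
    intro f
    unfold cd
    rw [Matrix.mulVec_mulVec, Matrix.mulVec_mulVec, mul_assoc]
  rw [key] at hv
  have h0 : Matrix.diagonal (fun i => ((d i:ℝ):ℂ)) *ᵥ w = 0 := by
    have := congrArg (fun x => Uᴴ *ᵥ x) hv
    simpa [Matrix.mulVec_mulVec, ← mul_assoc, hU1] using this
  have h1 : ∀ i, (d i : ℂ) * w i = 0 := by
    intro i
    have := congrFun h0 i
    simpa [Matrix.mulVec_diagonal] using this
  rw [key]
  have h2 : Matrix.diagonal (fun i => ((e i:ℝ):ℂ)) *ᵥ w = 0 := by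
    funext i
    simp only [Matrix.mulVec_diagonal]
    rcases eq_or_ne (d i) 0 with hd0 | hd0
    · rw [hde i hd0]
      simp
    · have hw0 : w i = 0 := by
        rcases mul_eq_zero.mp (h1 i) with h | h
        · exact absurd (by exact_mod_cast h) hd0
        · exact h
      rw [hw0, mul_zero]
      rfl
  rw [h2, Matrix.mulVec_zero]


lemma cd_const {U : Mn n} (hU2 : U * Uᴴ = 1) (c : ℝ) :
    cd U (fun _ => c) = (c : ℂ) • (1 : Mn n) := by
  have h1 : (fun _ : Fin n => c) = fun i => c * (fun _ : Fin n => (1:ℝ)) i := by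
    funext i; ring
  rw [h1, cd_smul, cd_one hU2]

lemma psd_support {U : Mn n} (hU1 : Uᴴ * U = 1) (hU2 : U * Uᴴ = 1) {d : Fin n → ℝ}
    {W : Mn n} (hW : W.PosSemidef)
    (h : ∀ i, d i = 0 → W *ᵥ (U *ᵥ Pi.single i 1) = 0) :
    cd U (fun i => if d i = 0 then 0 else 1) * W * cd U (fun i => if d i = 0 then 0 else 1) = W := by
  set R := cd U (fun i => if d i = 0 then 0 else 1) with hR
  have hcol : ∀ i, d i = 0 → ∀ a, (W * U) a i = 0 := by
    intro i hi a
    have h1 := h i hi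
    rw [Matrix.mulVec_mulVec] at h1
    have h2 := congrFun h1 a
    simpa [Matrix.mulVec_single] using h2
  have hzero : W * U * Matrix.diagonal (fun i => ((if d i = 0 then (1:ℝ) else 0 : ℝ) : ℂ)) = 0 := by
    ext a i
    rw [Matrix.mul_diagonal]
    rcases eq_or_ne (d i) 0 with hi | hi
    · rw [hcol i hi a, zero_mul]
      rfl
    · simp [hi]
  have h1R : (1 : Mn n) - R = cd U (fun i => if d i = 0 then 1 else 0) := by
    have e : (fun i => if d i = 0 then (1:ℝ) else 0)
        = (fun _ : Fin n => (1:ℝ)) - (fun i => if d i = 0 then (0:ℝ) else 1) := by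
      funext i; by_cases hi : d i = 0 <;> simp [hi]
    rw [e, cd_sub, cd_one hU2, hR]
  have hWR : W * ((1 : Mn n) - R) = 0 := by
    rw [h1R]
    unfold cd
    calc W * (U * Matrix.diagonal (fun i => ((if d i = 0 then (1:ℝ) else 0 : ℝ) : ℂ)) * Uᴴ)
        = (W * U * Matrix.diagonal (fun i => ((if d i = 0 then (1:ℝ) else 0 : ℝ) : ℂ))) * Uᴴ := by
          noncomm_ring
      _ = 0 := by rw [hzero, zero_mul]
  have hWR2 : W * R = W := by
    have := hWR
    rw [mul_sub, mul_one] at this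
    have h2 := sub_eq_zero.mp this
    exact h2.symm
  have hRW : R * W = W := by
    have hRH : R.IsHermitian := cd_herm U _
    calc R * W = (Wᴴ * Rᴴ)ᴴ := by simp [Matrix.conjTranspose_mul]
      _ = (W * R)ᴴ := by rw [hW.1.eq, hRH.eq]
      _ = W := by rw [hWR2, hW.1.eq]
  rw [mul_assoc, hWR2, hRW]

lemma herm_bound {M : Mn n} (hM : M.IsHermitian) :
    ∃ c : ℝ, 0 < c ∧ ((c : ℂ) • (1 : Mn n) - M).PosSemidef ∧ ((c : ℂ) • (1 : Mn n) + M).PosSemidef := by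
  set U : Mn n := (hM.eigenvectorUnitary : Mn n) with hU
  set μ := hM.eigenvalues with hμ
  have hU2 : U * Uᴴ = 1 := hM.eigenvectorUnitary.2.2
  have hspec : M = cd U μ := hM.spectral_theorem
  set c : ℝ := (∑ i, |μ i|) + 1 with hc
  have hcpos : 0 < c := by positivity
  have hbound : ∀ i, |μ i| ≤ c - 1 := by
    intro i
    have : |μ i| ≤ ∑ j, |μ j| :=
      Finset.single_le_sum (fun j _ => abs_nonneg (μ j)) (Finset.mem_univ i)
    simpa [hc] using this
  refine ⟨c, hcpos, ?_, ?_⟩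
  · have e : (c : ℂ) • (1 : Mn n) - M = cd U ((fun _ => c) - μ) := by
      rw [cd_sub, cd_const hU2, ← hspec]
    rw [e]
    refine cd_psd U fun i => ?_
    have h1 := hbound i
    have h2 := abs_le.mp h1
    simp only [Pi.sub_apply]
    linarith
  · have e : (c : ℂ) • (1 : Mn n) + M = cd U ((fun _ => c) + μ) := by
      rw [cd_add, cd_const hU2, ← hspec]
    rw [e]
    refine cd_psd U fun i => ?_
    have h1 := hbound i
    have h2 := abs_le.mp h1
    simp only [Pi.add_apply]
    linarith

lemma herm_part1 (Z : Mn n) : ((2:ℂ)⁻¹ • (Z + Zᴴ)).IsHermitian := by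
  unfold Matrix.IsHermitian
  rw [Matrix.conjTranspose_smul, Matrix.conjTranspose_add, Matrix.conjTranspose_conjTranspose,
    add_comm Zᴴ Z]
  congr 1
  simp

lemma herm_part2 (Z : Mn n) : ((2 * Complex.I)⁻¹ • (Z - Zᴴ)).IsHermitian := by
  unfold Matrix.IsHermitian
  rw [Matrix.conjTranspose_smul, Matrix.conjTranspose_sub, Matrix.conjTranspose_conjTranspose]
  have h1 : star ((2 * Complex.I)⁻¹ : ℂ) = -((2 * Complex.I)⁻¹) := by
    have h0 : star (2 * Complex.I) = -(2 * Complex.I) := by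
      simp [Complex.star_def, _root_.map_mul, Complex.conj_I]
    rw [star_inv₀, h0, inv_neg]
  have h2 : Zᴴ - Z = -(Z - Zᴴ) := (neg_sub _ _).symm
  rw [h1, h2, neg_smul, smul_neg, neg_neg]

lemma part_decomp (Z : Mn n) :
    Z = (2:ℂ)⁻¹ • (Z + Zᴴ) + Complex.I • ((2 * Complex.I)⁻¹ • (Z - Zᴴ)) := by
  have hI : Complex.I * (2 * Complex.I)⁻¹ = 2⁻¹ := by
    rw [mul_inv, mul_left_comm, mul_inv_cancel₀ Complex.I_ne_zero, mul_one]
  calc Z = (2:ℂ)⁻¹ • ((2:ℂ) • Z) := by rw [smul_smul]; norm_num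
    _ = (2:ℂ)⁻¹ • ((Z + Zᴴ) + (Z - Zᴴ)) := by
        congr 1
        rw [two_smul]
        abel
    _ = (2:ℂ)⁻¹ • (Z + Zᴴ) + (2:ℂ)⁻¹ • (Z - Zᴴ) := smul_add _ _ _
    _ = (2:ℂ)⁻¹ • (Z + Zᴴ) + Complex.I • ((2 * Complex.I)⁻¹ • (Z - Zᴴ)) := by
        rw [smul_smul, hI]


lemma trace_S {T : Module.End ℂ (Mn n)} (hTtr : IsTracePreserving T) {P Q : Mn n}
    (hPidem : P * P = P) (hQ2 : Q * Q = Q) (hQ : Q = 1 - P) (X : Mn n) :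
    ((sandwich Q * T) X).trace = X.trace - (P * T X * P).trace := by
  rw [Module.End.mul_apply, sandwich_apply]
  rw [Matrix.trace_mul_cycle Q (T X) Q, hQ2]
  rw [Matrix.trace_mul_cycle P (T X) P, hPidem]
  rw [hQ, sub_mul, one_mul, Matrix.trace_sub, hTtr X]

lemma core (T : Module.End ℂ (Mn n)) (hTpos : IsPosMap T) (hTtr : IsTracePreserving T)
    (hirr : IsIrreducibleMap T) (P : Mn n) (hPH : P.IsHermitian) (hPidem : P * P = P)
    (hP0 : P ≠ 0) (Q : Mn n) (hQ : Q = 1 - P)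
    (U : Mn n) (hU1 : Uᴴ * U = 1) (hU2 : U * Uᴴ = 1) (μ : Fin n → ℝ)
    (A : Mn n) (hAeq : A = cd U μ)
    (hfix : (sandwich Q * T) A = A) (hposμ : ∃ i, 0 < μ i) : False := by
  have hQH : Q.IsHermitian := by
    rw [hQ]
    exact Matrix.isHermitian_one.sub hPH
  have hQ2 : Q * Q = Q := by
    have e : (1 - P) * (1 - P) = 1 - P - P + P * P := by noncomm_ring
    rw [hQ, e, hPidem]
    abel
  set S : Module.End ℂ (Mn n) := sandwich Q * T with hS
  have hSpsd : ∀ X : Mn n, X.PosSemidef → (S X).PosSemidef := by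
    intro X hX
    rw [hS, Module.End.mul_apply, sandwich_apply]
    have h1 := (hTpos X hX).mul_mul_conjTranspose_same Q
    rwa [hQH.eq] at h1
  have hSpow : ∀ (k : ℕ) (X : Mn n), X.PosSemidef → ((S ^ k) X).PosSemidef := by
    intro k
    induction k with
    | zero => intro X hX; simpa using hX
    | succ k ih =>
        intro X hX
        rw [pow_succ', Module.End.mul_apply]
        exact hSpsd _ (ih X hX)
  set μp : Fin n → ℝ := fun i => if 0 < μ i then μ i else 0 with hμp
  set μm : Fin n → ℝ := fun i => if 0 < μ i then 0 else -(μ i) with hμm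
  set ind : Fin n → ℝ := fun i => if 0 < μ i then 1 else 0 with hindd
  set Ap := cd U μp with hApd
  set Am := cd U μm with hAmd
  set E := cd U ind with hEd
  have hdecomp : A = Ap - Am := by
    have e : μp - μm = μ := by
      funext i
      simp only [Pi.sub_apply, hμp, hμm]
      by_cases h : 0 < μ i <;> simp [h]
    rw [hApd, hAmd, ← cd_sub, e, hAeq]
  have hEA : E * A = Ap := by
    have e : (fun i => ind i * μ i) = μp := by
      funext i
      simp only [hindd, hμp]
      by_cases h : 0 < μ i <;> simp [h]
    rw [hEd, hAeq, cd_mul hU1, e, hApd]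
  have hμpnn : ∀ i, 0 ≤ μp i := by
    intro i
    simp only [hμp]
    by_cases h : 0 < μ i <;> simp [h, le_of_lt]
  have hμmnn : ∀ i, 0 ≤ μm i := by
    intro i
    simp only [hμm]
    by_cases h : 0 < μ i <;> simp [h]
    linarith [not_lt.mp h]
  have hApPsd : Ap.PosSemidef := cd_psd U hμpnn
  have hAmPsd : Am.PosSemidef := cd_psd U hμmnn
  have hEH : E.IsHermitian := cd_herm U ind
  have hE2 : E * E = E := by
    have e : (fun i => ind i * ind i) = ind := by
      funext i
      simp only [hindd]
      by_cases h : 0 < μ i <;> simp [h]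
    rw [hEd, cd_mul hU1, e]
  have hE'H : ((1 : Mn n) - E).IsHermitian := Matrix.isHermitian_one.sub hEH
  have hE'2 : ((1 : Mn n) - E) * (1 - E) = 1 - E := by
    have e : ((1 : Mn n) - E) * (1 - E) = 1 - E - E + E * E := by noncomm_ring
    rw [e, hE2]
    abel
  set tAp : ℝ := ∑ i, μp i with htApd
  have htAp : 0 < tAp := by
    obtain ⟨i0, hi0⟩ := hposμ
    refine Finset.sum_pos' (fun i _ => hμpnn i) ⟨i0, Finset.mem_univ _, ?_⟩
    simp only [hμp]
    rw [if_pos hi0]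
    exact hi0
  have hTrAp : Ap.trace = (tAp : ℂ) := by
    rw [hApd, cd_trace hU1, htApd]
  set D : ℕ → Mn n := fun k => (S ^ k) Ap with hDd
  have hfixk : ∀ k, (S ^ k) A = A := by
    intro k
    induction k with
    | zero => simp
    | succ k ih =>
        rw [pow_succ, Module.End.mul_apply, hfix, ih]
  set g : ℕ → ℂ := fun k => (P * T (D k) * P).trace with hgd
  have hDpsd : ∀ k, (D k).PosSemidef := fun k => hSpow k Ap hApPsd
  have hgpsd : ∀ k, (P * T (D k) * P).PosSemidef := by
    intro k
    have h1 := (hTpos _ (hDpsd k)).mul_mul_conjTranspose_same P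
    rwa [hPH.eq] at h1
  have hg0 : ∀ k, 0 ≤ g k := fun k => trace_psd_nonneg (hgpsd k)
  have hDsucc : ∀ k, D (k + 1) = S (D k) := by
    intro k
    show (S ^ (k+1)) Ap = S ((S ^ k) Ap)
    rw [pow_succ', Module.End.mul_apply]
  have htrD : ∀ k, (D (k + 1)).trace = (D k).trace - g k := by
    intro k
    rw [hDsucc k]
    exact trace_S hTtr hPidem hQ2 hQ (D k)
  have htrsum : ∀ k, (D k).trace = Ap.trace - ∑ j ∈ Finset.range k, g j := by
    intro k
    induction k with
    | zero => simp [hDd]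
    | succ k ih =>
        rw [htrD k, ih, Finset.sum_range_succ]
        ring
  have hDk_ge : ∀ k, Ap.trace ≤ (D k).trace := by
    intro k
    have h1 : (S ^ k) A = D k - (S ^ k) Am := by
      rw [hdecomp, map_sub]
    have h2 : Ap.trace = (E * D k).trace - (E * ((S ^ k) Am)).trace := by
      calc Ap.trace = (E * A).trace := by rw [hEA]
        _ = (E * ((S ^ k) A)).trace := by rw [hfixk k]
        _ = (E * (D k - (S ^ k) Am)).trace := by rw [h1]
        _ = (E * D k).trace - (E * ((S ^ k) Am)).trace := by
            rw [mul_sub, Matrix.trace_sub]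
    have h3 : 0 ≤ (E * ((S ^ k) Am)).trace :=
      trace_proj_mul_nonneg hEH hE2 (hSpow k Am hAmPsd)
    have h4 : (E * D k).trace ≤ (D k).trace := by
      have h5 : 0 ≤ ((1 - E) * D k).trace := trace_proj_mul_nonneg hE'H hE'2 (hDpsd k)
      have h6 : ((1 - E) * D k).trace = (D k).trace - (E * D k).trace := by
        rw [sub_mul, one_mul, Matrix.trace_sub]
      rw [h6] at h5
      exact sub_nonneg.mp h5
    rw [h2]
    exact le_trans (sub_le_self _ h3) h4
  have hgz : ∀ j, g j = 0 := by
    intro j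
    have h1 := hDk_ge (j + 1)
    rw [htrsum (j + 1)] at h1
    have h2 : ∑ i ∈ Finset.range (j + 1), g i ≤ 0 := (le_sub_self_iff Ap.trace).mp h1
    have h3 : ∑ i ∈ Finset.range (j + 1), g i = 0 :=
      le_antisymm h2 (Finset.sum_nonneg fun i _ => hg0 i)
    exact (Finset.sum_eq_zero_iff_of_nonneg (fun i _ => hg0 i)).mp h3 j
      (Finset.self_mem_range_succ j)
  have hTD : ∀ k, Q * T (D k) * Q = T (D k) := by
    intro k
    have hz : P * T (D k) * P = 0 := psd_trace_zero (hgpsd k) (hgz k)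
    obtain ⟨hl, hr⟩ := psd_corner_zero (hTpos _ (hDpsd k)) hPH hz
    have expand : (1 - P) * T (D k) * (1 - P)
        = T (D k) - P * T (D k) - T (D k) * P + P * (T (D k) * P) := by
      noncomm_ring
    rw [hQ, expand, hr, hl, mul_zero]
    abel
  have hDstep : ∀ k, D (k + 1) = T (D k) := by
    intro k
    rw [hDsucc k, hS, Module.End.mul_apply, sandwich_apply]
    exact hTD k
  have hQD : ∀ k, Q * D (k + 1) * Q = D (k + 1) := by
    intro k
    have h1 : D (k + 1) = Q * T (D k) * Q := by
      rw [hDsucc k, hS, Module.End.mul_apply, sandwich_apply]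
    rw [h1]
    calc Q * (Q * T (D k) * Q) * Q = (Q * Q) * T (D k) * (Q * Q) := by noncomm_ring
      _ = Q * T (D k) * Q := by rw [hQ2]
  set CC : ℕ → Mn n := fun m => ∑ k ∈ Finset.range (m + 1), D (k + 1) with hCCd
  have hCCpsd : ∀ m, (CC m).PosSemidef := by
    intro m
    exact Finset.sum_induction _ _ (fun a b ha hb => ha.add hb) Matrix.PosSemidef.zero
      (fun k _ => hDpsd (k + 1))
  have htrDk : ∀ k, (D k).trace = (tAp : ℂ) := by
    intro k
    rw [htrsum k, Finset.sum_eq_zero (fun i _ => hgz i), sub_zero, hTrAp]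
  have hCCtr : ∀ m, (CC m).trace = ((m + 1 : ℕ) : ℂ) * (tAp : ℂ) := by
    intro m
    show (∑ k ∈ Finset.range (m + 1), D (k + 1)).trace = _
    rw [Matrix.trace_sum, Finset.sum_congr rfl (fun k _ => htrDk (k + 1)), Finset.sum_const,
      Finset.card_range, nsmul_eq_mul]
  have hCCne : ∀ m, CC m ≠ 0 := by
    intro m h
    have h1 := hCCtr m
    rw [h, Matrix.trace_zero] at h1
    have h2 : ((m + 1 : ℕ) : ℂ) ≠ 0 := Nat.cast_ne_zero.mpr (Nat.succ_ne_zero m)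
    have h3 : ((tAp : ℝ) : ℂ) ≠ 0 := by
      exact_mod_cast ne_of_gt htAp
    exact (mul_ne_zero h2 h3) h1.symm
  have hQCC : ∀ m, Q * CC m * Q = CC m := by
    intro m
    show Q * (∑ k ∈ Finset.range (m + 1), D (k + 1)) * Q = ∑ k ∈ Finset.range (m + 1), D (k + 1)
    rw [Finset.mul_sum, Finset.sum_mul]
    exact Finset.sum_congr rfl fun k _ => hQD k
  have hCCsub : ∀ m, CC (m + 1) - CC m = D (m + 2) := by
    intro m
    show (∑ k ∈ Finset.range (m + 2), D (k + 1)) - (∑ k ∈ Finset.range (m + 1), D (k + 1)) = _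
    rw [Finset.sum_range_succ]
    abel
  have hCCT : ∀ m, CC (m + 1) - T (CC m) = D 1 := by
    intro m
    have h1 : T (CC m) = ∑ k ∈ Finset.range (m + 1), D (k + 2) := by
      show T (∑ k ∈ Finset.range (m + 1), D (k + 1)) = _
      rw [map_sum]
      exact Finset.sum_congr rfl fun k _ => (hDstep (k + 1)).symm
    have h2 : CC (m + 1) = (∑ k ∈ Finset.range (m + 1), D (k + 2)) + D 1 := by
      show (∑ k ∈ Finset.range (m + 2), D (k + 1)) = _
      exact Finset.sum_range_succ' (fun k => D (k + 1)) (m + 1)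
    rw [h2, h1]
    abel
  set Km : ℕ → Submodule ℂ (Fin n → ℂ) := fun m => LinearMap.ker (Matrix.mulVecLin (CC m))
    with hKmd
  have hKmono : ∀ m, Km (m + 1) ≤ Km m := by
    intro m v hv
    rw [hKmd, LinearMap.mem_ker, Matrix.mulVecLin_apply] at hv ⊢
    exact psd_kernel_mono (hCCpsd m) (by rw [hCCsub m]; exact hDpsd (m + 2)) hv
  have hstab : ∃ m, Km m = Km (m + 1) := by
    by_contra hcon
    push_neg at hcon
    have hlt : ∀ m, Km (m + 1) < Km m := fun m =>
      lt_of_le_of_ne (hKmono m) fun h => hcon m h.symm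
    have hrank : ∀ m, Module.finrank ℂ (Km (m + 1)) < Module.finrank ℂ (Km m) := fun m =>
      Submodule.finrank_lt_finrank_of_lt (hlt m)
    have hbound : ∀ m, Module.finrank ℂ (Km m) + m ≤ Module.finrank ℂ (Km 0) := by
      intro m
      induction m with
      | zero => simp
      | succ m ih =>
          have := hrank m
          omega
    have := hbound (Module.finrank ℂ (Km 0) + 1)
    omega
  obtain ⟨m, hKeq⟩ := hstab
  have hCpsd := hCCpsd m
  have hCH : (CC m).IsHermitian := hCpsd.1
  set V : Mn n := (hCH.eigenvectorUnitary : Mn n) with hVd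
  set ν : Fin n → ℝ := hCH.eigenvalues with hνd
  have hV1 : Vᴴ * V = 1 := Matrix.UnitaryGroup.star_mul_self _
  have hV2 : V * Vᴴ = 1 := hCH.eigenvectorUnitary.2.2
  have hspecC : CC m = cd V ν := hCH.spectral_theorem
  have hνnn : ∀ i, 0 ≤ ν i := hCpsd.eigenvalues_nonneg
  set R := cd V (fun i => if ν i = 0 then 0 else 1) with hRdef
  have hRH : R.IsHermitian := cd_herm V _
  have hR2 : R * R = R := by
    have e : (fun i => (if ν i = 0 then (0:ℝ) else 1) * (if ν i = 0 then (0:ℝ) else 1))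
        = fun i => if ν i = 0 then (0:ℝ) else 1 := by
      funext i
      by_cases h : ν i = 0 <;> simp [h]
    rw [hRdef, cd_mul hV1, e]
  have hRCR : R * CC m * R = CC m := by
    have e : (fun i => ((if ν i = 0 then (0:ℝ) else 1) * ν i) * (if ν i = 0 then (0:ℝ) else 1))
        = ν := by
      funext i
      by_cases h : ν i = 0 <;> simp [h]
    rw [hRdef, hspecC, cd_mul hV1, cd_mul hV1, e]
  have hRne0 : R ≠ 0 := by
    intro h
    have h1 : CC m = 0 := by
      rw [← hRCR, h, zero_mul, zero_mul]
    exact hCCne m h1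
  have hPcol : ∃ w, P *ᵥ w ≠ 0 := by
    by_contra hcon
    push_neg at hcon
    apply hP0
    ext a b
    have := congrFun (hcon (Pi.single b 1)) a
    simpa [Matrix.mulVec_single] using this
  obtain ⟨w, hw⟩ := hPcol
  have hPv : P *ᵥ (P *ᵥ w) = P *ᵥ w := by
    rw [Matrix.mulVec_mulVec, hPidem]
  have hQv : Q *ᵥ (P *ᵥ w) = 0 := by
    rw [hQ, Matrix.sub_mulVec, Matrix.one_mulVec, hPv, sub_self]
  have hCv : CC m *ᵥ (P *ᵥ w) = 0 := by
    rw [← hQCC m, ← Matrix.mulVec_mulVec, hQv, Matrix.mulVec_zero]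
  have hRv : R *ᵥ (P *ᵥ w) = 0 := by
    rw [hRdef]
    refine cd_mulVec_zero hV1 (d := ν) ?_ ?_
    · intro i hi
      simp [hi]
    · rw [← hspecC]
      exact hCv
  have hRne1 : R ≠ 1 := by
    intro h
    rw [h, Matrix.one_mulVec] at hRv
    exact hw hRv
  have hTCcol : ∀ i, ν i = 0 → T (CC m) *ᵥ (V *ᵥ Pi.single i 1) = 0 := by
    intro i hi
    have hcol : CC m *ᵥ (V *ᵥ Pi.single i 1) = 0 := by
      rw [hspecC, cd_mulVec_col hV1, hi]
      simp
    have hmem : (V *ᵥ Pi.single i 1) ∈ Km m := by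
      rw [hKmd, LinearMap.mem_ker, Matrix.mulVecLin_apply]
      exact hcol
    have hmem2 : (V *ᵥ Pi.single i 1) ∈ Km (m + 1) := hKeq ▸ hmem
    have hC'col : CC (m + 1) *ᵥ (V *ᵥ Pi.single i 1) = 0 := by
      rw [hKmd, LinearMap.mem_ker, Matrix.mulVecLin_apply] at hmem2
      exact hmem2
    exact psd_kernel_mono (hTpos _ hCpsd) (by rw [hCCT m]; exact hDpsd 1) hC'col
  have hsup : ∀ {W : Mn n}, W.PosSemidef →
      (∀ i, ν i = 0 → W *ᵥ (V *ᵥ Pi.single i 1) = 0) → R * W * R = W := by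
    intro W hW h
    rw [hRdef]
    exact psd_support hV1 hV2 hW h
  have hTCR : R * T (CC m) * R = T (CC m) := hsup (hTpos _ hCpsd) hTCcol
  have hνne : ∃ i, ν i ≠ 0 := by
    by_contra hcon
    push_neg at hcon
    apply hCCne m
    have e : ν = 0 := funext hcon
    rw [hspecC, e, cd_zero]
  have hermInv : ∀ M : Mn n, M.IsHermitian → R * M * R = M → T M = R * T M * R := by
    intro M hMH hMR
    obtain ⟨c, hc, hc1, hc2⟩ := herm_bound hMH
    have hcR1 : ((c : ℂ) • R - M).PosSemidef := by
      have h1 := hc1.mul_mul_conjTranspose_same R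
      rw [hRH.eq] at h1
      have e : R * ((c : ℂ) • (1 : Mn n) - M) * R = (c : ℂ) • R - M := by
        rw [mul_sub, sub_mul, Matrix.mul_smul, mul_one, Matrix.smul_mul, hR2, hMR]
      rwa [e] at h1
    have hcR2 : ((c : ℂ) • R + M).PosSemidef := by
      have h1 := hc2.mul_mul_conjTranspose_same R
      rw [hRH.eq] at h1
      have e : R * ((c : ℂ) • (1 : Mn n) + M) * R = (c : ℂ) • R + M := by
        rw [mul_add, add_mul, Matrix.mul_smul, mul_one, Matrix.smul_mul, hR2, hMR]
      rwa [e] at h1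
    obtain ⟨i1, hi1⟩ := hνne
    set s : Finset (Fin n) := Finset.univ.filter (fun i => ν i ≠ 0) with hsd
    have hsne : s.Nonempty := ⟨i1, by simp [hsd, hi1]⟩
    set ε : ℝ := s.inf' hsne ν with hεd
    have hεpos : 0 < ε := by
      obtain ⟨i2, hi2, he⟩ := Finset.exists_mem_eq_inf' hsne ν
      rw [hεd, he]
      rcases (hνnn i2).lt_or_eq with h | h
      · exact h
      · exfalso
        rw [hsd, Finset.mem_filter] at hi2
        exact hi2.2 h.symm
    have hεle : ∀ i, ν i ≠ 0 → ε ≤ ν i := fun i hi =>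
      Finset.inf'_le _ (by simp [hsd, hi])
    have hCεR : (CC m - (ε : ℂ) • R).PosSemidef := by
      have e1 : cd V (fun i => ε * (if ν i = 0 then (0:ℝ) else 1)) = (ε : ℂ) • R := by
        rw [hRdef, cd_smul]
      have e2 : CC m - (ε : ℂ) • R
          = cd V (ν - fun i => ε * (if ν i = 0 then (0:ℝ) else 1)) := by
        rw [cd_sub, e1, ← hspecC]
      rw [e2]
      refine cd_psd V fun i => ?_
      simp only [Pi.sub_apply]
      by_cases h : ν i = 0
      · simp [h]
      · have := hεle i h
        simp only [if_neg h, mul_one]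
        linarith
    set t : ℝ := c / ε with htd
    have htpos : 0 < t := div_pos hc hεpos
    have htε : t * ε = c := div_mul_cancel₀ c (ne_of_gt hεpos)
    have key1 : ((t : ℂ) • CC m - M).PosSemidef := by
      have h1 : ((t : ℂ) • (CC m - (ε : ℂ) • R)).PosSemidef := psd_smul hCεR htpos.le
      have h2 := h1.add hcR1
      have e : (t : ℂ) • (CC m - (ε : ℂ) • R) + ((c : ℂ) • R - M)
          = (t : ℂ) • CC m - M := by
        rw [smul_sub, smul_smul, ← Complex.ofReal_mul, htε]
        abel
      rwa [e] at h2
    have key2 : ((t : ℂ) • CC m + M).PosSemidef := by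
      have h1 : ((t : ℂ) • (CC m - (ε : ℂ) • R)).PosSemidef := psd_smul hCεR htpos.le
      have h2 := h1.add hcR2
      have e : (t : ℂ) • (CC m - (ε : ℂ) • R) + ((c : ℂ) • R + M)
          = (t : ℂ) • CC m + M := by
        rw [smul_sub, smul_smul, ← Complex.ofReal_mul, htε]
        abel
      rwa [e] at h2
    have hW1psd : (T ((t : ℂ) • CC m + M)).PosSemidef := hTpos _ key2
    have hW1col : ∀ i, ν i = 0 → T ((t : ℂ) • CC m + M) *ᵥ (V *ᵥ Pi.single i 1) = 0 := by
      intro i hi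
      have hYpsd : (((2 * t : ℝ) : ℂ) • T (CC m) - T ((t : ℂ) • CC m + M)).PosSemidef := by
        have e : ((2 * t : ℝ) : ℂ) • T (CC m) - T ((t : ℂ) • CC m + M)
            = T ((t : ℂ) • CC m - M) := by
          rw [← _root_.map_smul, ← map_sub]
          congr 1
          push_cast
          rw [two_mul, add_smul]
          abel
        rw [e]
        exact hTpos _ key1
      refine psd_kernel_mono hW1psd hYpsd ?_
      rw [Matrix.smul_mulVec, hTCcol i hi, smul_zero]
    have hW1R := hsup hW1psd hW1col
    have hTM : T M = T ((t : ℂ) • CC m + M) - (t : ℂ) • T (CC m) := by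
      rw [map_add, _root_.map_smul]
      abel
    rw [hTM]
    calc T ((t : ℂ) • CC m + M) - (t : ℂ) • T (CC m)
        = R * T ((t : ℂ) • CC m + M) * R - (t : ℂ) • (R * T (CC m) * R) := by
          rw [hW1R, hTCR]
      _ = R * (T ((t : ℂ) • CC m + M) - (t : ℂ) • T (CC m)) * R := by
          rw [mul_sub, sub_mul, Matrix.mul_smul, Matrix.smul_mul]
  have hInv : ∀ X : Mn n, ∃ Y : Mn n, T (R * X * R) = R * Y * R := by
    intro X
    refine ⟨T (R * X * R), ?_⟩
    set Z := R * X * R with hZd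
    have hZR : R * Z * R = Z := by
      rw [hZd]
      calc R * (R * X * R) * R = (R * R) * X * (R * R) := by noncomm_ring
        _ = R * X * R := by rw [hR2]
    have hZHR : R * Zᴴ * R = Zᴴ := by
      have h1 := congrArg Matrix.conjTranspose hZR
      simp only [Matrix.conjTranspose_mul, hRH.eq] at h1
      rwa [← mul_assoc] at h1
    have hHR : R * ((2:ℂ)⁻¹ • (Z + Zᴴ)) * R = (2:ℂ)⁻¹ • (Z + Zᴴ) := by
      rw [Matrix.mul_smul, Matrix.smul_mul, mul_add, add_mul, hZR, hZHR]
    have hKR : R * ((2 * Complex.I)⁻¹ • (Z - Zᴴ)) * R = (2 * Complex.I)⁻¹ • (Z - Zᴴ) := by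
      rw [Matrix.mul_smul, Matrix.smul_mul, mul_sub, sub_mul, hZR, hZHR]
    have e1 := hermInv _ (herm_part1 Z) hHR
    have e2 := hermInv _ (herm_part2 Z) hKR
    calc T Z = T ((2:ℂ)⁻¹ • (Z + Zᴴ)) + Complex.I • T ((2 * Complex.I)⁻¹ • (Z - Zᴴ)) := by
          rw [← _root_.map_smul, ← map_add, ← part_decomp Z]
      _ = R * (T ((2:ℂ)⁻¹ • (Z + Zᴴ)) + Complex.I • T ((2 * Complex.I)⁻¹ • (Z - Zᴴ))) * R := by
          rw [mul_add, add_mul, Matrix.mul_smul, Matrix.smul_mul]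
          rw [← e1, ← e2]
      _ = R * T Z * R := by
          rw [← _root_.map_smul, ← map_add, ← part_decomp Z]
  rcases hirr R hRH hR2 hInv with h | h
  · exact hRne0 h
  · exact hRne1 h


lemma hermfix_false (T : Module.End ℂ (Mn n)) (hTpos : IsPosMap T)
    (hTtr : IsTracePreserving T) (hirr : IsIrreducibleMap T)
    (P : Mn n) (hPH : P.IsHermitian) (hPidem : P * P = P) (hP0 : P ≠ 0)
    (Q : Mn n) (hQ : Q = 1 - P)
    (A : Mn n) (hAH : A.IsHermitian) (hAfix : (sandwich Q * T) A = A) (hAne : A ≠ 0) :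
    False := by
  have hU1 : (hAH.eigenvectorUnitary : Mn n)ᴴ * (hAH.eigenvectorUnitary : Mn n) = 1 :=
    Matrix.UnitaryGroup.star_mul_self _
  have hU2 : (hAH.eigenvectorUnitary : Mn n) * (hAH.eigenvectorUnitary : Mn n)ᴴ = 1 :=
    hAH.eigenvectorUnitary.2.2
  have hspec : A = cd (hAH.eigenvectorUnitary : Mn n) hAH.eigenvalues := hAH.spectral_theorem
  by_cases hp : ∃ i, 0 < hAH.eigenvalues i
  · exact core T hTpos hTtr hirr P hPH hPidem hP0 Q hQ _ hU1 hU2 hAH.eigenvalues A hspec hAfix hp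
  · push_neg at hp
    have hneg : ∃ i, 0 < -(hAH.eigenvalues i) := by
      by_contra hcon
      push_neg at hcon
      apply hAne
      have e : hAH.eigenvalues = 0 := by
        funext i
        have h1 := hcon i
        have h2 := hp i
        simp only [Pi.zero_apply]
        linarith [neg_nonpos.mp h1]
      rw [hspec, e]
      exact cd_zero _
    refine core T hTpos hTtr hirr P hPH hPidem hP0 Q hQ _ hU1 hU2
      (fun i => -(hAH.eigenvalues i)) (-A) ?_ ?_ hneg
    · have e : cd (hAH.eigenvectorUnitary : Mn n) (fun i => -(hAH.eigenvalues i)) = -A := by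
        rw [show (fun i => -(hAH.eigenvalues i)) = -(hAH.eigenvalues) from rfl, cd_neg, ← hspec]
      exact e.symm
    · rw [map_neg, hAfix]

lemma stmt19_aux {n : ℕ} (T : Module.End ℂ (Mn n))
    (hTpos : IsPosMap T) (hTtr : IsTracePreserving T) (hirr : IsIrreducibleMap T)
    (P : Mn n) (hPH : P.IsHermitian) (hPidem : P * P = P) (hP0 : P ≠ 0)
    (Q : Mn n) (hQ : Q = 1 - P) :
    ¬ Module.End.HasEigenvalue (sandwich Q * T) (1 : ℂ) := by
  intro heig
  obtain ⟨X, hX⟩ := heig.exists_hasEigenvector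
  have hfixX : (sandwich Q * T) X = X := by
    have h1 := hX.apply_eq_smul
    rwa [one_smul] at h1
  have hXne : X ≠ 0 := hX.right
  have hQH : Q.IsHermitian := by
    rw [hQ]
    exact Matrix.isHermitian_one.sub hPH
  -- T maps Hermitian to Hermitian
  have hThermit : ∀ M : Mn n, M.IsHermitian → (T M).IsHermitian := by
    intro M hM
    have hdec : M = cd (hM.eigenvectorUnitary : Mn n) (fun i => if 0 < hM.eigenvalues i then hM.eigenvalues i else 0)
        - cd (hM.eigenvectorUnitary : Mn n) (fun i => if 0 < hM.eigenvalues i then 0 else -(hM.eigenvalues i)) := by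
      rw [← cd_sub]
      have e : ((fun i => if 0 < hM.eigenvalues i then hM.eigenvalues i else 0)
          - (fun i => if 0 < hM.eigenvalues i then 0 else -(hM.eigenvalues i)) : Fin n → ℝ)
          = hM.eigenvalues := by
        funext i
        simp only [Pi.sub_apply]
        by_cases h : 0 < hM.eigenvalues i <;> simp [h]
      rw [e]
      exact hM.spectral_theorem
    have hp1 : (T (cd (hM.eigenvectorUnitary : Mn n)
        (fun i => if 0 < hM.eigenvalues i then hM.eigenvalues i else 0))).PosSemidef := by
      refine hTpos _ (cd_psd _ fun i => ?_)
      by_cases h : 0 < hM.eigenvalues i <;> simp [h, le_of_lt]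
    have hp2 : (T (cd (hM.eigenvectorUnitary : Mn n)
        (fun i => if 0 < hM.eigenvalues i then 0 else -(hM.eigenvalues i)))).PosSemidef := by
      refine hTpos _ (cd_psd _ fun i => ?_)
      by_cases h : 0 < hM.eigenvalues i <;> simp [h]
      linarith [not_lt.mp h]
    rw [hdec, map_sub]
    exact hp1.1.sub hp2.1
  have hTconj : ∀ M : Mn n, T Mᴴ = (T M)ᴴ := by
    intro M
    have h1 := herm_part1 M
    have h2 := herm_part2 M
    have hMd := part_decomp M
    have hMH : Mᴴ = (2:ℂ)⁻¹ • (M + Mᴴ) - Complex.I • ((2 * Complex.I)⁻¹ • (M - Mᴴ)) := by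
      calc Mᴴ = ((2:ℂ)⁻¹ • (M + Mᴴ) + Complex.I • ((2 * Complex.I)⁻¹ • (M - Mᴴ)))ᴴ := by
            rw [← hMd]
        _ = (2:ℂ)⁻¹ • (M + Mᴴ) - Complex.I • ((2 * Complex.I)⁻¹ • (M - Mᴴ)) := by
            rw [Matrix.conjTranspose_add, h1.eq, Matrix.conjTranspose_smul, h2.eq,
              Complex.star_def, Complex.conj_I, neg_smul, ← sub_eq_add_neg]
    have hRr : (T M)ᴴ = T ((2:ℂ)⁻¹ • (M + Mᴴ))
        - Complex.I • T ((2 * Complex.I)⁻¹ • (M - Mᴴ)) := by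
      conv_lhs => rw [hMd]
      rw [map_add, _root_.map_smul T Complex.I ((2 * Complex.I)⁻¹ • (M - Mᴴ)),
        Matrix.conjTranspose_add, Matrix.conjTranspose_smul,
        (hThermit _ h1).eq, (hThermit _ h2).eq, Complex.star_def, Complex.conj_I, neg_smul,
        ← sub_eq_add_neg]
    rw [hRr]
    conv_lhs => rw [hMH]
    rw [map_sub, _root_.map_smul T Complex.I ((2 * Complex.I)⁻¹ • (M - Mᴴ))]
  have hSconj : ∀ M : Mn n, (sandwich Q * T) Mᴴ = ((sandwich Q * T) M)ᴴ := by
    intro M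
    rw [Module.End.mul_apply, Module.End.mul_apply, sandwich_apply, sandwich_apply, hTconj]
    simp [Matrix.conjTranspose_mul, hQH.eq, Matrix.mul_assoc]
  have hfix1 : (sandwich Q * T) ((2:ℂ)⁻¹ • (X + Xᴴ)) = (2:ℂ)⁻¹ • (X + Xᴴ) := by
    rw [_root_.map_smul, map_add, hfixX, hSconj, hfixX]
  have hfix2 : (sandwich Q * T) ((2 * Complex.I)⁻¹ • (X - Xᴴ))
      = (2 * Complex.I)⁻¹ • (X - Xᴴ) := by
    rw [_root_.map_smul, map_sub, hfixX, hSconj, hfixX]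
  have hne : (2:ℂ)⁻¹ • (X + Xᴴ) ≠ 0 ∨ (2 * Complex.I)⁻¹ • (X - Xᴴ) ≠ 0 := by
    by_contra hcon
    push_neg at hcon
    apply hXne
    rw [part_decomp X, hcon.1, hcon.2]
    simp
  rcases hne with h | h
  · exact hermfix_false T hTpos hTtr hirr P hPH hPidem hP0 Q hQ _ (herm_part1 X) hfix1 h
  · exact hermfix_false T hTpos hTtr hirr P hPH hPidem hP0 Q hQ _ (herm_part2 X) hfix2 h

end Stmt19

/-- Every irreducible positive trace-preserving map `T` on `M_n` satisfies
Assumption I with respect to every nonzero goal subspace `V` (orthogonal projection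
`P ≠ 0`, `Q = I − P`): `1` is not an eigenvalue of `ℚT`. -/
theorem stmt19 {n : ℕ} (T : Module.End ℂ (Mn n))
    (hTpos : IsPosMap T) (hTtr : IsTracePreserving T) (hirr : IsIrreducibleMap T)
    (P : Mn n) (hPH : P.IsHermitian) (hPidem : P * P = P) (hP0 : P ≠ 0)
    (Q : Mn n) (hQ : Q = 1 - P) :
    ¬ Module.End.HasEigenvalue (sandwich Q * T) (1 : ℂ) := by
  exact Stmt19.stmt19_aux T hTpos hTtr hirr P hPH hPidem hP0 Q hQ
end
end
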